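/- arXiv:1410.2054 — 12 statements merged into one kernel-verified Lean document; each statement's English description precedes it below -/
import Mathlib

section
/- For a fixed integer m, the function h_m(n) = Σ_{k=1}^n gcd(k,n)·e^{-2πikm/n} is multiplicative in n: if gcd(u,v) = 1 then h_m(u)·h_m(v) = h_m(uv). -/
open Finset

/-- Periodicity of the exponential term. -/
lemma exp_term_period (m n k q : ℕ) :
    Complex.exp (-(2 * Real.pi * Complex.I * (k + n * q) * m / n)) =
    Complex.exp (-(2 * Real.pi * Complex.I * k * m / n)) := by
  rcases Nat.eq_zero_or_pos n with rfl | hn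
  · simp
  have hn' : (n : ℂ) ≠ 0 := Nat.cast_ne_zero.mpr hn.ne'
  have key : -(2 * Real.pi * Complex.I * ((k : ℂ) + n * q) * m / n) =
      -(2 * Real.pi * Complex.I * k * m / n) + ((-(q * m) : ℤ) : ℂ) * (2 * Real.pi * Complex.I) := by
    push_cast
    field_simp
    ring
  rw [key, Complex.exp_add, Complex.exp_int_mul_two_pi_mul_I, mul_one]

/-- Convert the sum over `Icc 1 n` to a sum over `range n`. -/
lemma sum_Icc_eq_sum_range (m n : ℕ) (hn : 0 < n) :
    ∑ k ∈ Finset.Icc 1 n, (Nat.gcd k n : ℂ) *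
      Complex.exp (-(2 * Real.pi * Complex.I * k * m / n)) =
    ∑ k ∈ Finset.range n, (Nat.gcd k n : ℂ) *
      Complex.exp (-(2 * Real.pi * Complex.I * k * m / n)) := by
  have h1 : Finset.Icc 1 n = insert n (Finset.Ico 1 n) := (Finset.Ico_insert_right hn).symm
  have h2 : Finset.range n = insert 0 (Finset.Ico 1 n) := by
    rw [Finset.range_eq_Ico, show (1:ℕ) = 0 + 1 from rfl, Finset.Ico_add_one_left_eq_Ioo]
    exact (Finset.Ioo_insert_left hn).symm
  rw [h1, h2, Finset.sum_insert (by simp), Finset.sum_insert (by simp)]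
  congr 1
  have hn' : (n : ℂ) ≠ 0 := Nat.cast_ne_zero.mpr hn.ne'
  have e1 : -(2 * Real.pi * Complex.I * (n : ℂ) * m / n) =
      ((-(m : ℤ) : ℤ) : ℂ) * (2 * Real.pi * Complex.I) := by
    push_cast
    field_simp
  have e2 : -(2 * Real.pi * Complex.I * ((0 : ℕ) : ℂ) * m / n) =
      (((0 : ℤ) : ℤ) : ℂ) * (2 * Real.pi * Complex.I) := by
    push_cast
    ring
  rw [Nat.gcd_self, show Nat.gcd 0 n = n from Nat.gcd_zero_left n, e1, e2,
    Complex.exp_int_mul_two_pi_mul_I, Complex.exp_int_mul_two_pi_mul_I]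

theorem dft_gcd_multiplicative (m u v : ℕ) (hu : 0 < u) (hv : 0 < v)
    (huv : Nat.Coprime u v) :
    (∑ k ∈ Finset.Icc 1 u, (Nat.gcd k u : ℂ) *
        Complex.exp (-(2 * Real.pi * Complex.I * k * m / u))) *
    (∑ k ∈ Finset.Icc 1 v, (Nat.gcd k v : ℂ) *
        Complex.exp (-(2 * Real.pi * Complex.I * k * m / v))) =
    ∑ k ∈ Finset.Icc 1 (u * v), (Nat.gcd k (u * v) : ℂ) *
        Complex.exp (-(2 * Real.pi * Complex.I * k * m / (u * v))) := by
  have huv0 : 0 < u * v := Nat.mul_pos hu hv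
  have huvsum := sum_Icc_eq_sum_range m (u * v) huv0
  push_cast at huvsum
  rw [sum_Icc_eq_sum_range m u hu, sum_Icc_eq_sum_range m v hv, huvsum]
  rw [Finset.sum_mul_sum, ← Finset.sum_product']
  -- the bijection (a, b) ↦ (a*v + b*u) % (u*v)
  set f : ℕ × ℕ → ℕ := fun p => (p.1 * v + p.2 * u) % (u * v) with hf
  have hmaps : ∀ p ∈ Finset.range u ×ˢ Finset.range v, f p ∈ Finset.range (u * v) := by
    intro p _
    simp only [Finset.mem_range]
    exact Nat.mod_lt _ huv0
  have hinj : ∀ p₁ ∈ Finset.range u ×ˢ Finset.range v,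
      ∀ p₂ ∈ Finset.range u ×ˢ Finset.range v, f p₁ = f p₂ → p₁ = p₂ := by
    intro ⟨a₁, b₁⟩ hp₁ ⟨a₂, b₂⟩ hp₂ hfeq
    simp only [Finset.mem_product, Finset.mem_range] at hp₁ hp₂
    have hmod : a₁ * v + b₁ * u ≡ a₂ * v + b₂ * u [MOD u * v] := hfeq
    have hmu : a₁ * v ≡ a₂ * v [MOD u] := by
      have h1 : a₁ * v + b₁ * u ≡ a₂ * v + b₂ * u [MOD u] := hmod.of_mul_right v
      have e1 : (a₁ * v + b₁ * u) % u = (a₁ * v) % u := Nat.add_mul_mod_self_right _ _ _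
      have e2 : (a₂ * v + b₂ * u) % u = (a₂ * v) % u := Nat.add_mul_mod_self_right _ _ _
      unfold Nat.ModEq at h1 ⊢
      rw [e1, e2] at h1
      exact h1
    have hmv : b₁ * u ≡ b₂ * u [MOD v] := by
      have h1 : a₁ * v + b₁ * u ≡ a₂ * v + b₂ * u [MOD v] := hmod.of_mul_left u
      have e1 : ∀ a b : ℕ, (a * v + b * u) % v = (b * u) % v := by
        intro a b
        rw [add_comm]
        exact Nat.add_mul_mod_self_right _ _ _
      unfold Nat.ModEq at h1 ⊢
      rw [e1, e1] at h1
      exact h1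
    have ha : a₁ = a₂ := by
      have := Nat.ModEq.cancel_right_of_coprime (by simpa using huv) hmu
      unfold Nat.ModEq at this
      rwa [Nat.mod_eq_of_lt hp₁.1, Nat.mod_eq_of_lt hp₂.1] at this
    have hb : b₁ = b₂ := by
      have := Nat.ModEq.cancel_right_of_coprime (by simpa using huv.symm) hmv
      unfold Nat.ModEq at this
      rwa [Nat.mod_eq_of_lt hp₁.2, Nat.mod_eq_of_lt hp₂.2] at this
    exact Prod.ext ha hb
  refine Finset.sum_bij (fun p _ => f p) hmaps hinj ?_ ?_
  · -- surjectivity via cardinality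
    intro k hk
    have hcard : (Finset.range (u * v)).card ≤ (Finset.range u ×ˢ Finset.range v).card := by
      simp [Finset.card_product]
    obtain ⟨p, hp, hpk⟩ := Finset.surj_on_of_inj_on_of_card_le (fun p _ => f p)
      hmaps (fun a₁ a₂ ha₁ ha₂ h => hinj a₁ ha₁ a₂ ha₂ h) hcard k hk
    exact ⟨p, hp, hpk.symm⟩
  · -- term equality
    intro ⟨a, b⟩ hp
    simp only [Finset.mem_product, Finset.mem_range] at hp
    -- gcd part
    have hgcd : Nat.gcd (f (a, b)) (u * v) = Nat.gcd a u * Nat.gcd b v := by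
      have h0 : Nat.gcd (f (a, b)) (u * v) = Nat.gcd (a * v + b * u) (u * v) := by
        show Nat.gcd ((a * v + b * u) % (u * v)) (u * v) = _
        rw [← Nat.gcd_rec, Nat.gcd_comm]
      rw [h0, Nat.Coprime.gcd_mul _ huv]
      congr 1
      · rw [Nat.gcd_add_mul_right_left u (a * v) b, Nat.Coprime.gcd_mul_right_cancel a huv.symm]
      · rw [add_comm, Nat.gcd_add_mul_right_left v (b * u) a, Nat.Coprime.gcd_mul_right_cancel b huv]
    -- exponential part
    have hu' : (u : ℂ) ≠ 0 := Nat.cast_ne_zero.mpr hu.ne'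
    have hv' : (v : ℂ) ≠ 0 := Nat.cast_ne_zero.mpr hv.ne'
    have hexp : Complex.exp (-(2 * Real.pi * Complex.I * a * m / u)) *
        Complex.exp (-(2 * Real.pi * Complex.I * b * m / v)) =
        Complex.exp (-(2 * Real.pi * Complex.I * ((f (a, b) : ℕ) : ℂ) * m / ((u : ℂ) * v))) := by
      rw [← Complex.exp_add]
      set r : ℕ := (a * v + b * u) % (u * v) with hr
      set q : ℕ := (a * v + b * u) / (u * v) with hq
      have hnat : r + u * v * q = a * v + b * u := Nat.mod_add_div _ _
      have hc : ((r : ℂ) + ((u * v : ℕ) : ℂ) * (q : ℂ)) = (a : ℂ) * v + (b : ℂ) * u := by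
        push_cast
        exact_mod_cast congrArg (fun x : ℕ => (x : ℂ)) hnat
      have harg : -(2 * Real.pi * Complex.I * (a : ℂ) * m / u) +
          -(2 * Real.pi * Complex.I * (b : ℂ) * m / v) =
          -(2 * Real.pi * Complex.I * ((r : ℂ) + ((u * v : ℕ) : ℂ) * (q : ℂ)) * m
            / ((u * v : ℕ) : ℂ)) := by
        rw [hc]
        push_cast
        field_simp
        ring
      rw [harg, exp_term_period m (u * v) r q]
      norm_cast
    rw [← hexp, hgcd]
    push_cast
    ring
end

section
/- For any multiplicative arithmetic function f and fixed integer m, the function n ↦ Σ_{k=1}^n f(gcd(k,n))·e^{-2πikm/n} is multiplicative in n. -/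
open Finset

private lemma gcd_mul_of_coprime' {u v : ℕ} (huv : Nat.Coprime u v) (k : ℕ) :
    Nat.gcd k (u * v) = Nat.gcd k u * Nat.gcd k v := by
  apply Nat.dvd_antisymm
  · have h1 : Nat.gcd k (u * v) ∣ Nat.gcd (Nat.gcd k (u * v)) u * Nat.gcd (Nat.gcd k (u * v)) v :=
      Nat.dvd_gcd_mul_gcd_iff_dvd_mul.mpr (Nat.gcd_dvd_right k (u * v))
    exact h1.trans (mul_dvd_mul
      (Nat.gcd_dvd_gcd_of_dvd_left u (Nat.gcd_dvd_left k (u * v)))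
      (Nat.gcd_dvd_gcd_of_dvd_left v (Nat.gcd_dvd_left k (u * v))))
  · have hcop : Nat.Coprime (Nat.gcd k u) (Nat.gcd k v) :=
      Nat.Coprime.coprime_dvd_left (Nat.gcd_dvd_right k u)
        (huv.coprime_dvd_right (Nat.gcd_dvd_right k v))
    exact Nat.dvd_gcd
      (hcop.mul_dvd_of_dvd_of_dvd (Nat.gcd_dvd_left k u) (Nat.gcd_dvd_left k v))
      (mul_dvd_mul (Nat.gcd_dvd_right k u) (Nat.gcd_dvd_right k v))

private lemma exp_mod' (n m k : ℕ) (hn : 0 < n) :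
    Complex.exp (-(2 * Real.pi * Complex.I * ((k % n : ℕ) : ℂ) * m / n)) =
    Complex.exp (-(2 * Real.pi * Complex.I * (k : ℂ) * m / n)) := by
  have hn' : (n : ℂ) ≠ 0 := Nat.cast_ne_zero.mpr hn.ne'
  set q := k / n with hq
  set r := k % n with hr
  have hk : (k : ℂ) = (n : ℂ) * (q : ℂ) + (r : ℂ) := by
    rw [← Nat.cast_mul, ← Nat.cast_add, hq, hr, Nat.div_add_mod]
  have heq : -(2 * Real.pi * Complex.I * (k : ℂ) * m / n) =
      -(2 * Real.pi * Complex.I * (r : ℂ) * m / n) +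
      (((-(q * m : ℕ) : ℤ) : ℤ) : ℂ) * (2 * Real.pi * Complex.I) := by
    rw [hk]; push_cast; field_simp; ring
  rw [heq, Complex.exp_add, Complex.exp_int_mul_two_pi_mul_I, mul_one]

private lemma icc_to_range' (n m : ℕ) (hn : 0 < n) (f : ℕ → ℂ) :
    (∑ k ∈ Finset.Icc 1 n, f (Nat.gcd k n) *
        Complex.exp (-(2 * Real.pi * Complex.I * k * m / n))) =
    ∑ k ∈ Finset.range n, f (Nat.gcd k n) *
        Complex.exp (-(2 * Real.pi * Complex.I * k * m / n)) := by
  set F : ℕ → ℂ := fun k => f (Nat.gcd k n) *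
      Complex.exp (-(2 * Real.pi * Complex.I * k * m / n)) with hF
  have hn' : (n : ℂ) ≠ 0 := Nat.cast_ne_zero.mpr hn.ne'
  have h0 : F n = F 0 := by
    have hgcd : Nat.gcd n n = Nat.gcd 0 n := by simp
    have e1 : Complex.exp ((((-(m : ℤ)) : ℤ) : ℂ) * (2 * Real.pi * Complex.I)) = 1 :=
      Complex.exp_int_mul_two_pi_mul_I (-(m : ℤ))
    have h1 : -(2 * Real.pi * Complex.I * (n : ℂ) * m / n) =
        (((-(m : ℤ)) : ℤ) : ℂ) * (2 * Real.pi * Complex.I) := by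
      push_cast
      field_simp
    have hexp : Complex.exp (-(2 * Real.pi * Complex.I * (n : ℂ) * m / n)) =
        Complex.exp (-(2 * Real.pi * Complex.I * ((0 : ℕ) : ℂ) * m / n)) := by
      rw [h1, e1]
      norm_num
    simp only [hF, hgcd]
    rw [hexp]
  obtain ⟨N, rfl⟩ : ∃ N, n = N + 1 := ⟨n - 1, (Nat.succ_pred_eq_of_pos hn).symm⟩
  calc (∑ k ∈ Finset.Icc 1 (N + 1), F k)
      = ∑ k ∈ Finset.range (N + 1), F (1 + k) := by
        rw [← Finset.Ico_add_one_right_eq_Icc, Finset.sum_Ico_eq_sum_range]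
        simp
    _ = (∑ k ∈ Finset.range N, F (1 + k)) + F (1 + N) := Finset.sum_range_succ _ N
    _ = (∑ k ∈ Finset.range N, F (k + 1)) + F 0 := by
        rw [add_comm 1 N, h0]
        congr 1
        exact Finset.sum_congr rfl fun i _ => by rw [add_comm]
    _ = ∑ k ∈ Finset.range (N + 1), F k := (Finset.sum_range_succ' F N).symm

theorem dft_f_gcd_multiplicative (f : ℕ → ℂ) (hf1 : f 1 = 1)
    (hf : ∀ a b : ℕ, Nat.Coprime a b → f (a * b) = f a * f b)
    (m u v : ℕ) (hu : 0 < u) (hv : 0 < v) (huv : Nat.Coprime u v) :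
    (∑ k ∈ Finset.Icc 1 u, f (Nat.gcd k u) *
        Complex.exp (-(2 * Real.pi * Complex.I * k * m / u))) *
    (∑ k ∈ Finset.Icc 1 v, f (Nat.gcd k v) *
        Complex.exp (-(2 * Real.pi * Complex.I * k * m / v))) =
    ∑ k ∈ Finset.Icc 1 (u * v), f (Nat.gcd k (u * v)) *
        Complex.exp (-(2 * Real.pi * Complex.I * k * m / (u * v))) := by
  rw [show ((u : ℂ) * v) = ((u * v : ℕ) : ℂ) by push_cast; ring,
    icc_to_range' u m hu, icc_to_range' v m hv, icc_to_range' (u * v) m (Nat.mul_pos hu hv)]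
  rw [Finset.sum_mul_sum, ← Finset.sum_product']
  have huv' : 0 < u * v := Nat.mul_pos hu hv
  have hup : (u : ℂ) ≠ 0 := Nat.cast_ne_zero.mpr hu.ne'
  have hvp : (v : ℂ) ≠ 0 := Nat.cast_ne_zero.mpr hv.ne'
  set imap : ℕ × ℕ → ℕ := fun p => (p.1 * v + p.2 * u) % (u * v) with himap
  have hmaps : ∀ p ∈ Finset.range u ×ˢ Finset.range v, imap p ∈ Finset.range (u * v) :=
    fun p _ => Finset.mem_range.mpr (Nat.mod_lt _ huv')
  have key : ∀ (w z : ℕ) (a₁ b₁ a₂ b₂ : ℕ), a₁ < w → a₂ < w → Nat.Coprime z w →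
      (a₁ * z + b₁ * w) ≡ (a₂ * z + b₂ * w) [MOD w] → a₁ = a₂ := by
    intro w z a₁ b₁ a₂ b₂ ha₁ ha₂ hcop h
    have e₁ : (a₁ * z + b₁ * w) ≡ a₁ * z + 0 [MOD w] :=
      (Nat.ModEq.refl (a₁ * z)).add ((Nat.modEq_zero_iff_dvd).mpr ⟨b₁, mul_comm b₁ w⟩)
    have e₂ : (a₂ * z + b₂ * w) ≡ a₂ * z + 0 [MOD w] :=
      (Nat.ModEq.refl (a₂ * z)).add ((Nat.modEq_zero_iff_dvd).mpr ⟨b₂, mul_comm b₂ w⟩)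
    rw [add_zero] at e₁ e₂
    have h' : a₁ * z ≡ a₂ * z [MOD w] := e₁.symm.trans (h.trans e₂)
    have h'' : a₁ ≡ a₂ [MOD w] := h'.cancel_right_of_coprime hcop.symm
    have h3 : a₁ % w = a₂ % w := h''
    rwa [Nat.mod_eq_of_lt ha₁, Nat.mod_eq_of_lt ha₂] at h3
  have hinj : Set.InjOn imap ↑(Finset.range u ×ˢ Finset.range v) := by
    intro p₁ h₁ p₂ h₂ heq
    simp only [Finset.coe_product, Set.mem_prod, Finset.mem_coe, Finset.mem_range] at h₁ h₂
    have hmod : (p₁.1 * v + p₁.2 * u) ≡ (p₂.1 * v + p₂.2 * u) [MOD u * v] := heq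
    have ha : p₁.1 = p₂.1 :=
      key u v p₁.1 p₁.2 p₂.1 p₂.2 h₁.1 h₂.1 huv.symm (hmod.of_dvd ⟨v, rfl⟩)
    have hb : p₁.2 = p₂.2 := by
      have hmod' : (p₁.2 * u + p₁.1 * v) ≡ (p₂.2 * u + p₂.1 * v) [MOD v] := by
        have := hmod.of_dvd ⟨u, mul_comm u v⟩
        rwa [add_comm (p₁.1 * v), add_comm (p₂.1 * v)] at this
      exact key v u p₁.2 p₁.1 p₂.2 p₂.1 h₁.2 h₂.2 huv hmod'
    exact Prod.ext ha hb
  have hsurj : Set.SurjOn imap ↑(Finset.range u ×ˢ Finset.range v) ↑(Finset.range (u * v)) := by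
    intro k hk
    simp only [Finset.mem_coe] at hk
    obtain ⟨p, hp, hpk⟩ := Finset.surj_on_of_inj_on_of_card_le
      (s := Finset.range u ×ˢ Finset.range v) (t := Finset.range (u * v))
      (fun p _ => imap p) (fun p hp => hmaps p hp)
      (fun p₁ p₂ h₁ h₂ h => hinj (Finset.mem_coe.mpr h₁) (Finset.mem_coe.mpr h₂) h)
      (by simp) k hk
    exact ⟨p, Finset.mem_coe.mpr hp, hpk.symm⟩
  apply Finset.sum_nbij imap hmaps hinj hsurj
  intro p hp
  simp only [Finset.mem_product, Finset.mem_range] at hp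
  obtain ⟨a, b⟩ := p
  obtain ⟨ha, hb⟩ := hp
  have hx : Nat.gcd ((a * v + b * u) % (u * v)) (u * v) = Nat.gcd a u * Nat.gcd b v := by
    have h1 : Nat.gcd ((a * v + b * u) % (u * v)) (u * v) = Nat.gcd (a * v + b * u) (u * v) := by
      rw [← Nat.gcd_rec, Nat.gcd_comm]
    rw [h1, gcd_mul_of_coprime' huv]
    congr 1
    · rw [Nat.gcd_add_mul_right_left u (a * v) b]
      exact (huv.symm.gcd_mul_right_cancel a)
    · rw [add_comm, Nat.gcd_add_mul_right_left v (b * u) a]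
      exact (huv.gcd_mul_right_cancel b)
  have hfmul : f (Nat.gcd a u * Nat.gcd b v) = f (Nat.gcd a u) * f (Nat.gcd b v) :=
    hf _ _ (Nat.Coprime.coprime_dvd_left (Nat.gcd_dvd_right a u)
      (huv.coprime_dvd_right (Nat.gcd_dvd_right b v)))
  have hexp : Complex.exp (-(2 * Real.pi * Complex.I *
        (((a * v + b * u) % (u * v) : ℕ) : ℂ) * m / ((u : ℂ) * v))) =
      Complex.exp (-(2 * Real.pi * Complex.I * a * m / u)) *
      Complex.exp (-(2 * Real.pi * Complex.I * b * m / v)) := by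
    have h2 : Complex.exp (-(2 * Real.pi * Complex.I *
        (((a * v + b * u) % (u * v) : ℕ) : ℂ) * m / (((u * v : ℕ)) : ℂ))) =
        Complex.exp (-(2 * Real.pi * Complex.I * (((a * v + b * u : ℕ)) : ℂ) * m /
          (((u * v : ℕ)) : ℂ))) := exp_mod' (u * v) m (a * v + b * u) huv'
    push_cast at h2
    rw [h2, ← Complex.exp_add]
    congr 1
    push_cast
    field_simp
    ring
  simp only [himap]
  push_cast [hx, hfmul]
  push_cast at hexp
  rw [hexp]
  ring
end

section
/- For a prime p, exponent s ≥ 1, and m = u·p^t with gcd(u,p) = 1 and t ≥ 0, one has Σ_{k=1}^{p^s} gcd(k,p^s)·e^{-2πikm/p^s} = (min(t,s)+1)·φ(p^s) + [t ≥ s]·p^{s-1}, where [t ≥ s] is 1 if t ≥ s and 0 otherwise. -/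
open Finset


lemma geom_exp_sum (N m : ℕ) (hN : 0 < N) :
    ∑ k ∈ Finset.Icc 1 N, Complex.exp (-(2 * Real.pi * Complex.I * k * m / N)) =
      if N ∣ m then (N : ℂ) else 0 := by
  have hN0 : (N : ℂ) ≠ 0 := Nat.cast_ne_zero.mpr hN.ne'
  set z : ℂ := Complex.exp (-(2 * Real.pi * Complex.I * m / N)) with hz
  have hterm : ∀ k : ℕ, Complex.exp (-(2 * Real.pi * Complex.I * k * m / N)) = z ^ k := by
    intro k
    rw [hz, ← Complex.exp_nat_mul]
    congr 1
    ring
  have hzN : z ^ N = 1 := by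
    rw [hz, ← Complex.exp_nat_mul]
    have h : (N:ℂ) * -(2 * Real.pi * Complex.I * m / N) = ((-(m:ℤ) : ℤ) : ℂ) * (2 * Real.pi * Complex.I) := by
      push_cast
      field_simp
    rw [h]
    exact Complex.exp_int_mul_two_pi_mul_I (-(m:ℤ))
  have hz1 : z = 1 ↔ N ∣ m := by
    rw [hz, Complex.exp_eq_one_iff]
    constructor
    · rintro ⟨n, hn⟩
      field_simp at hn
      have h2 : (2 * (Real.pi:ℂ) * Complex.I) * (m:ℂ) = (2 * (Real.pi:ℂ) * Complex.I) * (((-n * N : ℤ)):ℂ) := by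
        push_cast
        linear_combination (-(2 * (Real.pi:ℂ) * Complex.I)) * hn
      have h3 : ((m:ℤ):ℂ) = (((-n * N : ℤ)):ℂ) := by
        have := mul_left_cancel₀ Complex.two_pi_I_ne_zero h2
        push_cast at this ⊢
        exact this
      have h4 : (m:ℤ) = -n * N := Int.cast_injective h3
      have : (N:ℤ) ∣ (m:ℤ) := ⟨-n, by linarith⟩
      exact_mod_cast this
    · rintro ⟨c, rfl⟩
      refine ⟨-c, ?_⟩
      push_cast
      field_simp
  rw [Finset.sum_congr rfl (fun k _ => hterm k)]
  by_cases h1 : z = 1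
  · rw [if_pos (hz1.mp h1)]
    simp [h1, Nat.card_Icc]
  · rw [if_neg (fun h => h1 (hz1.mpr h))]
    rw [← Finset.Ico_add_one_right_eq_Icc, Finset.sum_Ico_eq_sum_range]
    simp only [Nat.succ_sub_one, Nat.add_sub_cancel, pow_add, pow_one]
    rw [← Finset.mul_sum, geom_sum_eq h1, hzN]
    simp


lemma sum_multiples (d N : ℕ) (hd : 0 < d) (f : ℕ → ℂ) :
    ∑ k ∈ Finset.Icc 1 (d * N), (if d ∣ k then f k else 0) =
    ∑ k ∈ Finset.Icc 1 N, f (d * k) := by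
  rw [← Finset.sum_filter]
  have himg : (Finset.Icc 1 (d * N)).filter (fun k => d ∣ k) = (Finset.Icc 1 N).image (fun k => d * k) := by
    ext k
    simp only [Finset.mem_filter, Finset.mem_Icc, Finset.mem_image]
    constructor
    · rintro ⟨⟨h1, h2⟩, c, rfl⟩
      refine ⟨c, ⟨?_, Nat.le_of_mul_le_mul_left h2 hd⟩, rfl⟩
      rcases Nat.eq_zero_or_pos c with h | h
      · exfalso; rw [h, mul_zero] at h1; omega
      · exact h
    · rintro ⟨c, ⟨h1, h2⟩, rfl⟩
      exact ⟨⟨Nat.one_le_iff_ne_zero.mpr (by positivity), Nat.mul_le_mul_left d h2⟩, ⟨c, rfl⟩⟩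
  rw [himg, Finset.sum_image]
  intro x _ y _ h
  exact Nat.eq_of_mul_eq_mul_left hd h

lemma gcd_rep (p s : ℕ) (hp : p.Prime) (k : ℕ) (hk : 1 ≤ k) :
    (Nat.gcd k (p ^ s) : ℂ) =
      1 + ∑ j ∈ Finset.range s, ((p:ℂ) ^ (j+1) - (p:ℂ) ^ j) * (if p ^ (j+1) ∣ k then 1 else 0) := by
  obtain ⟨v, hvs, hv⟩ := (Nat.dvd_prime_pow hp).mp (Nat.gcd_dvd_right k (p ^ s))
  have hind : ∀ j, j < s → ((p ^ (j+1) ∣ k) ↔ j < v) := by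
    intro j hj
    constructor
    · intro hdvd
      have h2 : p ^ (j+1) ∣ Nat.gcd k (p ^ s) :=
        Nat.dvd_gcd hdvd (pow_dvd_pow p (by omega))
      rw [hv] at h2
      have := (Nat.pow_dvd_pow_iff_le_right hp.one_lt).mp h2
      omega
    · intro hjv
      exact (pow_dvd_pow p (by omega : j + 1 ≤ v)).trans (hv ▸ Nat.gcd_dvd_left k (p ^ s))
  have hstep : ∀ j ∈ Finset.range s,
      ((p:ℂ) ^ (j+1) - (p:ℂ) ^ j) * (if p ^ (j+1) ∣ k then 1 else 0)
        = if j < v then ((p:ℂ) ^ (j+1) - (p:ℂ) ^ j) else 0 := by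
    intro j hj
    rw [mul_ite, mul_one, mul_zero, if_congr (hind j (Finset.mem_range.mp hj)) rfl rfl]
  rw [Finset.sum_congr rfl hstep, ← Finset.sum_filter]
  have hfil : (Finset.range s).filter (fun j => j < v) = Finset.range v := by
    ext x
    simp only [Finset.mem_filter, Finset.mem_range]
    omega
  rw [hfil, Finset.sum_range_sub (fun j => (p:ℂ) ^ j)]
  rw [hv]
  push_cast
  ring

theorem dft_gcd_prime_power (p s t u : ℕ) (hp : p.Prime) (hs : 1 ≤ s)
    (hu : Nat.Coprime u p) :
    ∑ k ∈ Finset.Icc 1 (p ^ s), (Nat.gcd k (p ^ s) : ℂ) *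
        Complex.exp (-(2 * Real.pi * Complex.I * k * (u * p ^ t) / (p ^ s))) =
      ((min t s + 1 : ℕ) : ℂ) * (Nat.totient (p ^ s) : ℂ) +
        (if s ≤ t then ((p ^ (s - 1) : ℕ) : ℂ) else 0) := by
  have hp1 : 1 < p := hp.one_lt
  have hp0 : 0 < p := hp.pos
  have hpC : (p:ℂ) ≠ 0 := Nat.cast_ne_zero.mpr hp0.ne'
  have hdvd_iff : ∀ a : ℕ, (p ^ a ∣ u * p ^ t ↔ a ≤ t) := by
    intro a
    constructor
    · intro h
      rw [mul_comm] at h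
      have h2 : p ^ a ∣ p ^ t := (Nat.Coprime.dvd_of_dvd_mul_right ((hu.symm).pow_left a) h)
      exact (Nat.pow_dvd_pow_iff_le_right hp1).mp h2
    · intro h
      exact Dvd.dvd.mul_left (pow_dvd_pow p h) u
  have hpoint : ∀ k ∈ Finset.Icc 1 (p ^ s), (Nat.gcd k (p ^ s) : ℂ) *
        Complex.exp (-(2 * Real.pi * Complex.I * k * (u * p ^ t) / (p ^ s)))
      = Complex.exp (-(2 * Real.pi * Complex.I * k * (u * p ^ t) / (p ^ s)))
        + ∑ j ∈ Finset.range s, ((p:ℂ) ^ (j+1) - (p:ℂ) ^ j) *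
            (if p ^ (j+1) ∣ k then
              Complex.exp (-(2 * Real.pi * Complex.I * k * (u * p ^ t) / (p ^ s))) else 0) := by
    intro k hk
    rw [gcd_rep p s hp k (Finset.mem_Icc.mp hk).1, add_mul, one_mul, Finset.sum_mul]
    congr 1
    refine Finset.sum_congr rfl fun j _ => ?_
    rw [mul_assoc, ite_mul, one_mul, zero_mul]
  rw [Finset.sum_congr rfl hpoint, Finset.sum_add_distrib, Finset.sum_comm]
  have hfirst : ∑ k ∈ Finset.Icc 1 (p ^ s),
      Complex.exp (-(2 * Real.pi * Complex.I * k * (u * p ^ t) / (p ^ s)))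
        = if s ≤ t then ((p:ℂ)) ^ s else 0 := by
    have hg := geom_exp_sum (p ^ s) (u * p ^ t) (pow_pos hp0 s)
    push_cast at hg
    rw [hg, if_congr (hdvd_iff s) rfl rfl]
  have hinner : ∀ j ∈ Finset.range s,
      (∑ k ∈ Finset.Icc 1 (p ^ s), ((p:ℂ) ^ (j+1) - (p:ℂ) ^ j) *
          (if p ^ (j+1) ∣ k then
            Complex.exp (-(2 * Real.pi * Complex.I * k * (u * p ^ t) / (p ^ s))) else 0))
        = if s ≤ t + (j+1) then ((p:ℂ) ^ s - (p:ℂ) ^ (s-1)) else 0 := by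
    intro j hj
    have hj' : j < s := Finset.mem_range.mp hj
    rw [← Finset.mul_sum]
    have hsplit : p ^ s = p ^ (j+1) * p ^ (s-(j+1)) := by
      rw [← pow_add]; congr 1; omega
    have hIcc : Finset.Icc 1 (p ^ s) = Finset.Icc 1 (p ^ (j+1) * p ^ (s-(j+1))) := by
      rw [← hsplit]
    rw [hIcc, sum_multiples _ _ (pow_pos hp0 _)
      (fun k => Complex.exp (-(2 * Real.pi * Complex.I * k * (u * p ^ t) / (p ^ s))))]
    have hE2 : ∀ k : ℕ,
        Complex.exp (-(2 * Real.pi * Complex.I * ((p ^ (j+1) * k : ℕ):ℂ) * (u * p ^ t) / (p ^ s)))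
          = Complex.exp (-(2 * Real.pi * Complex.I * k * ((u : ℂ) * (p:ℂ) ^ t) / ((p:ℂ) ^ (s-(j+1))))) := by
      intro k
      congr 1
      have hne : ((p:ℂ)) ^ (j+1) ≠ 0 := pow_ne_zero _ hpC
      have hsC : ((p:ℂ)) ^ s = (p:ℂ) ^ (j+1) * (p:ℂ) ^ (s-(j+1)) := by
        rw [← pow_add]; congr 1; omega
      push_cast
      rw [hsC]
      field_simp
    rw [Finset.sum_congr rfl (fun k _ => hE2 k)]
    have hg := geom_exp_sum (p ^ (s-(j+1))) (u * p ^ t) (pow_pos hp0 _)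
    push_cast at hg
    rw [hg, if_congr (hdvd_iff _) rfl rfl]
    have hcond : (s - (j+1) ≤ t) ↔ (s ≤ t + (j+1)) := by omega
    rw [if_congr hcond rfl rfl]
    rcases le_or_gt s (t + (j+1)) with h | h
    · rw [if_pos h, if_pos h, sub_mul, ← pow_add, ← pow_add]
      congr 2 <;> omega
    · rw [if_neg (by omega), if_neg (by omega), mul_zero]
  rw [hfirst, Finset.sum_congr rfl hinner, ← Finset.sum_filter]
  have hfil : (Finset.range s).filter (fun j => s ≤ t + (j+1)) = Finset.Ico (s - (t+1)) s := by
    ext x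
    simp only [Finset.mem_filter, Finset.mem_range, Finset.mem_Ico]
    omega
  rw [hfil, Finset.sum_const, Nat.card_Ico, nsmul_eq_mul]
  have hφ : (Nat.totient (p ^ s) : ℂ) = (p:ℂ) ^ s - (p:ℂ) ^ (s-1) := by
    rw [Nat.totient_prime_pow hp hs]
    push_cast [Nat.cast_sub hp.one_le]
    rw [mul_sub, mul_one, ← pow_succ]
    congr 2
    omega
  rw [hφ]
  have hps1 : ((p ^ (s-1) : ℕ) : ℂ) = (p:ℂ) ^ (s-1) := by push_cast; rfl
  rcases le_or_gt s t with h | h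
  · rw [if_pos h, if_pos h, hps1]
    have h1 : s - (s - (t+1)) = s := by omega
    have h2 : min t s = s := by omega
    rw [h1, h2]
    push_cast
    ring
  · rw [if_neg (by omega), if_neg (by omega)]
    have h1 : s - (s - (t+1)) = t + 1 := by omega
    have h2 : min t s = t := by omega
    rw [h1, h2]
    push_cast
    ring
end

section
/- If n = ∏_{j=1}^r p_j^{s_j} is the prime factorization of n (with s_j ≥ 1), and m = u·∏_{i=1}^r p_i^{t_i} with gcd(u, p_i) = 1 for all i, then Σ_{k=1}^n gcd(k,n)·e^{-2πikm/n} = ∏_{i=1}^r [(min(t_i,s_i)+1)·φ(p_i^{s_i}) + [t_i ≥ s_i]·p_i^{s_i-1}]. -/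
open Finset

lemma sum_exp_Icc (N a : ℕ) (hN : 1 ≤ N) :
    ∑ j ∈ Icc 1 N, Complex.exp (-(2 * Real.pi * Complex.I * j * a / N)) =
      if N ∣ a then (N : ℂ) else 0 := by
  have hN0 : (N : ℂ) ≠ 0 := Nat.cast_ne_zero.mpr (by omega)
  set ζ : ℂ := Complex.exp (-(2 * Real.pi * Complex.I * a / N)) with hζ
  have hterm : ∀ j : ℕ, Complex.exp (-(2 * (Real.pi : ℂ) * Complex.I * j * a / N)) = ζ ^ j := by
    intro j
    rw [hζ, ← Complex.exp_nat_mul]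
    congr 1
    ring
  have h2 : (2 * (Real.pi : ℂ) * Complex.I) ≠ 0 := by
    simp [Real.pi_ne_zero, Complex.I_ne_zero]
  split_ifs with h
  · obtain ⟨c, rfl⟩ := h
    have hζ1 : ζ = 1 := by
      rw [hζ, ← Complex.exp_int_mul_two_pi_mul_I (-(c : ℤ))]
      congr 1
      push_cast
      field_simp
    simp only [hterm, hζ1, one_pow, Finset.sum_const, nsmul_eq_mul, mul_one]
    simp [Nat.card_Icc]
  · have hζN : ζ ^ N = 1 := by
      rw [hζ, ← Complex.exp_nat_mul, ← Complex.exp_int_mul_two_pi_mul_I (-(a : ℤ))]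
      congr 1
      push_cast
      field_simp
    have hζ1 : ζ ≠ 1 := by
      intro hone
      rw [hζ, Complex.exp_eq_one_iff] at hone
      obtain ⟨k, hk⟩ := hone
      apply h
      have ha : (2 * (Real.pi:ℂ) * Complex.I) * (a : ℂ)
          = (2 * (Real.pi:ℂ) * Complex.I) * (((-k : ℤ) : ℤ) * N : ℤ) := by
        field_simp at hk
        push_cast
        linear_combination (-(2 * (Real.pi:ℂ) * Complex.I)) * hk
      have ha' : (a : ℤ) = -k * N := by exact_mod_cast mul_left_cancel₀ h2 ha
      exact Int.natCast_dvd_natCast.mp ⟨-k, by linarith [ha']⟩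
    have : ∑ j ∈ Icc 1 N, Complex.exp (-(2 * (Real.pi:ℂ) * Complex.I * j * a / N))
        = ∑ i ∈ range N, ζ ^ (1 + i) := by
      rw [← Finset.Ico_add_one_right_eq_Icc, Finset.sum_Ico_eq_sum_range]
      simp only [hterm, Nat.succ_sub_one, Nat.add_sub_cancel]
    rw [this]
    have : ∑ i ∈ range N, ζ ^ (1 + i) = ζ * ∑ i ∈ range N, ζ ^ i := by
      rw [Finset.mul_sum]
      exact Finset.sum_congr rfl fun i _ => by rw [pow_add, pow_one]
    rw [this, geom_sum_eq hζ1, hζN]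
    simp

lemma dft_inner_sum (n d mm : ℕ) (hn : 1 ≤ n) (hdn : d ∣ n) (hd0 : 1 ≤ d) :
    ∑ k ∈ (Icc 1 n).filter (d ∣ ·), Complex.exp (-(2 * Real.pi * Complex.I * k * mm / n)) =
      if (n / d) ∣ mm then ((n / d : ℕ) : ℂ) else 0 := by
  obtain ⟨N, rfl⟩ := hdn
  have hN : 1 ≤ N := by
    rcases Nat.eq_zero_or_pos N with h | h
    · simp [h] at hn
    · exact h
  have hdiv : d * N / d = N := Nat.mul_div_cancel_left N hd0
  rw [hdiv, ← sum_exp_Icc N mm hN]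
  have hd0' : (d : ℂ) ≠ 0 := Nat.cast_ne_zero.mpr (by omega)
  have hN0' : (N : ℂ) ≠ 0 := Nat.cast_ne_zero.mpr (by omega)
  refine Finset.sum_nbij' (i := fun k => k / d) (j := fun j => d * j) ?_ ?_ ?_ ?_ ?_
  · intro k hk
    simp only [Finset.mem_filter, Finset.mem_Icc] at hk
    obtain ⟨⟨h1, h2⟩, c, rfl⟩ := hk
    show d * c / d ∈ Icc 1 N
    rw [Nat.mul_div_cancel_left c hd0]
    refine Finset.mem_Icc.mpr ⟨?_, Nat.le_of_mul_le_mul_left h2 hd0⟩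
    rcases Nat.eq_zero_or_pos c with h | h
    · simp [h] at h1
    · exact h
  · intro j hj
    simp only [Finset.mem_Icc] at hj
    refine Finset.mem_filter.mpr ⟨Finset.mem_Icc.mpr ⟨Nat.mul_pos hd0 hj.1, ?_⟩, Dvd.intro j rfl⟩
    exact Nat.mul_le_mul_left d hj.2
  · intro k hk
    simp only [Finset.mem_filter] at hk
    exact Nat.mul_div_cancel' hk.2
  · intro j _
    exact Nat.mul_div_cancel_left j hd0
  · intro k hk
    simp only [Finset.mem_filter] at hk
    obtain ⟨-, c, rfl⟩ := hk
    show _ = Complex.exp (-(2 * Real.pi * Complex.I * ((d * c / d : ℕ) : ℂ) * mm / N))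
    rw [Nat.mul_div_cancel_left c hd0]
    congr 1
    push_cast
    field_simp

lemma gcd_sum_eq (n mm : ℕ) (hn : 1 ≤ n) :
    ∑ k ∈ Icc 1 n, (Nat.gcd k n : ℂ) * Complex.exp (-(2 * Real.pi * Complex.I * k * mm / n)) =
      ((∑ d ∈ n.divisors, Nat.totient d * (if (n / d) ∣ mm then n / d else 0) : ℕ) : ℂ) := by
  have hgcd : ∀ k : ℕ, (Nat.gcd k n : ℂ)
      = ∑ d ∈ n.divisors, (if d ∣ k then (Nat.totient d : ℂ) else 0) := by
    intro k
    have h1 : (Nat.gcd k n).divisors = n.divisors.filter (· ∣ k) := by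
      ext d
      simp only [Nat.mem_divisors, Finset.mem_filter]
      constructor
      · rintro ⟨hd, hne⟩
        exact ⟨⟨hd.trans (Nat.gcd_dvd_right k n), by omega⟩, hd.trans (Nat.gcd_dvd_left k n)⟩
      · rintro ⟨⟨hdn, _⟩, hdk⟩
        refine ⟨Nat.dvd_gcd hdk hdn, fun hz => ?_⟩
        rw [Nat.gcd_eq_zero_iff] at hz
        omega
    have h2 := Nat.sum_totient (Nat.gcd k n)
    rw [h1, Finset.sum_filter] at h2
    rw [← h2]
    push_cast
    rfl
  calc ∑ k ∈ Icc 1 n, (Nat.gcd k n : ℂ) * Complex.exp (-(2 * Real.pi * Complex.I * k * mm / n))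
      = ∑ k ∈ Icc 1 n, ∑ d ∈ n.divisors,
          (if d ∣ k then (Nat.totient d : ℂ) * Complex.exp (-(2 * Real.pi * Complex.I * k * mm / n)) else 0) := by
        refine Finset.sum_congr rfl fun k _ => ?_
        rw [hgcd k, Finset.sum_mul]
        exact Finset.sum_congr rfl fun d _ => by split <;> simp
    _ = ∑ d ∈ n.divisors, ∑ k ∈ Icc 1 n,
          (if d ∣ k then (Nat.totient d : ℂ) * Complex.exp (-(2 * Real.pi * Complex.I * k * mm / n)) else 0) :=
        Finset.sum_comm
    _ = ∑ d ∈ n.divisors, (Nat.totient d : ℂ) *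
          ∑ k ∈ (Icc 1 n).filter (d ∣ ·), Complex.exp (-(2 * Real.pi * Complex.I * k * mm / n)) := by
        refine Finset.sum_congr rfl fun d _ => ?_
        rw [Finset.mul_sum, Finset.sum_filter]
    _ = ∑ d ∈ n.divisors, (Nat.totient d : ℂ) * (if (n / d) ∣ mm then ((n / d : ℕ) : ℂ) else 0) := by
        refine Finset.sum_congr rfl fun d hd => ?_
        rw [dft_inner_sum n d mm hn (Nat.mem_divisors.mp hd).1
          (Nat.pos_of_mem_divisors hd)]
    _ = _ := by
        push_cast [apply_ite (Nat.cast : ℕ → ℂ)]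
        rfl

def dft_phiF : ArithmeticFunction ℕ := ⟨Nat.totient, Nat.totient_zero⟩

lemma dft_phiF_mult : dft_phiF.IsMultiplicative :=
  ⟨Nat.totient_one, fun h => Nat.totient_mul h⟩

def dft_gF (m : ℕ) : ArithmeticFunction ℕ := ⟨fun e => if e ∣ m then e else 0, by simp⟩

lemma dft_gF_mult (m : ℕ) : (dft_gF m).IsMultiplicative := by
  constructor
  · simp [dft_gF]
  · intro a b hab
    show (if a * b ∣ m then a * b else 0) = (if a ∣ m then a else 0) * (if b ∣ m then b else 0)
    by_cases h : a * b ∣ m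
    · rw [if_pos h, if_pos ((dvd_mul_right a b).trans h), if_pos ((dvd_mul_left b a).trans h)]
    · rw [if_neg h]
      by_cases ha : a ∣ m
      · by_cases hb : b ∣ m
        · exact absurd (Nat.Coprime.mul_dvd_of_dvd_of_dvd hab ha hb) h
        · rw [if_neg hb, mul_zero]
      · rw [if_neg ha, zero_mul]

lemma dft_G_eq (m n : ℕ) :
    (∑ d ∈ n.divisors, Nat.totient d * (if (n / d) ∣ m then n / d else 0))
      = (dft_phiF * dft_gF m) n := by
  rw [ArithmeticFunction.mul_apply,
    Nat.sum_divisorsAntidiagonal (f := fun x y => dft_phiF x * dft_gF m y)]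
  rfl

lemma dft_G_prime_pow (pp m s t : ℕ) (hpp : pp.Prime) (hs : 1 ≤ s)
    (hdvd : ∀ c, pp ^ c ∣ m ↔ c ≤ t) :
    (∑ d ∈ (pp ^ s).divisors, Nat.totient d * (if ((pp ^ s) / d) ∣ m then (pp ^ s) / d else 0))
      = (min t s + 1) * Nat.totient (pp ^ s) + if s ≤ t then pp ^ (s - 1) else 0 := by
  rw [Nat.sum_divisors_prime_pow hpp]
  have step1 : ∀ j ∈ range (s + 1),
      Nat.totient (pp ^ j) * (if ((pp ^ s) / (pp ^ j)) ∣ m then (pp ^ s) / (pp ^ j) else 0)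
        = if s - min t s ≤ j then Nat.totient (pp ^ s) + (if j = 0 then pp ^ (s - 1) else 0) else 0 := by
    intro j hj
    rw [mem_range, Nat.lt_succ_iff] at hj
    rw [Nat.pow_div hj hpp.pos]
    have hcond : (pp ^ (s - j) ∣ m) ↔ (s - min t s ≤ j) := by
      rw [hdvd (s - j)]
      omega
    by_cases hc : s - min t s ≤ j
    · rw [if_pos (hcond.mpr hc), if_pos hc]
      rcases Nat.eq_zero_or_pos j with rfl | hj1
      · simp only [pow_zero, Nat.totient_one, one_mul, Nat.sub_zero, if_pos rfl]
        rw [Nat.totient_prime_pow hpp hs]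
        have key : pp ^ (s - 1) * ((pp - 1) + 1) = pp ^ s := by
          rw [Nat.sub_add_cancel hpp.one_le, ← pow_succ]
          congr 1
          omega
        rw [Nat.mul_add, mul_one] at key
        exact key.symm
      · rw [if_neg (by omega), add_zero, Nat.totient_prime_pow hpp hj1,
          Nat.totient_prime_pow hpp hs]
        have hpw : pp ^ (j - 1) * pp ^ (s - j) = pp ^ (s - 1) := by
          rw [← pow_add]
          congr 1
          omega
        calc pp ^ (j - 1) * (pp - 1) * pp ^ (s - j)
            = pp ^ (j - 1) * pp ^ (s - j) * (pp - 1) := by ring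
          _ = pp ^ (s - 1) * (pp - 1) := by rw [hpw]
    · rw [if_neg (fun hh => hc (hcond.mp hh)), if_neg hc, mul_zero]
  rw [Finset.sum_congr rfl step1, Finset.sum_ite, Finset.sum_const_zero, add_zero]
  have hfil : (range (s + 1)).filter (fun j => s - min t s ≤ j) = Icc (s - min t s) s := by
    ext j
    simp only [mem_filter, mem_range, Nat.lt_succ_iff, mem_Icc]
    omega
  have hsum0 : (∑ j ∈ Icc (s - min t s) s, if j = 0 then pp ^ (s - 1) else 0)
      = if 0 ∈ Icc (s - min t s) s then pp ^ (s - 1) else 0 :=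
    Finset.sum_ite_eq' _ _ _
  rw [hfil, Finset.sum_add_distrib, Finset.sum_const, hsum0, Nat.card_Icc, smul_eq_mul]
  have h1 : s + 1 - (s - min t s) = min t s + 1 := by omega
  rw [h1]
  congr 1
  refine if_congr ?_ rfl rfl
  simp only [mem_Icc]
  omega


theorem dft_gcd_prime_factorization (r : ℕ) (p s t : Fin r → ℕ) (u n m : ℕ)
    (hp : ∀ i, (p i).Prime) (hpinj : Function.Injective p)
    (hs : ∀ i, 1 ≤ s i)
    (hn : n = ∏ i, p i ^ s i)
    (hm : m = u * ∏ i, p i ^ t i)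
    (hu : ∀ i, Nat.Coprime u (p i))
    (hm1 : 1 ≤ m) (hmn : m ≤ n) :
    ∑ k ∈ Finset.Icc 1 n, (Nat.gcd k n : ℂ) *
        Complex.exp (-(2 * Real.pi * Complex.I * k * m / n)) =
      ∏ i, (((min (t i) (s i) + 1 : ℕ) : ℂ) * (Nat.totient (p i ^ s i) : ℂ) +
        (if s i ≤ t i then ((p i ^ (s i - 1) : ℕ) : ℂ) else 0)) := by
  have hn1 : 1 ≤ n := by
    rw [hn]
    exact Finset.prod_pos fun i _ => pow_pos (hp i).pos _
  rw [gcd_sum_eq n m hn1, dft_G_eq]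
  have hmult : (dft_phiF * dft_gF m).IsMultiplicative := dft_phiF_mult.mul (dft_gF_mult m)
  have hpair : (↑(univ : Finset (Fin r)) : Set (Fin r)).Pairwise
      (Function.onFun Nat.Coprime fun i => p i ^ s i) := by
    intro i _ j _ hij
    exact Nat.Coprime.pow _ _ ((Nat.coprime_primes (hp i) (hp j)).mpr fun h => hij (hpinj h))
  rw [hn, hmult.map_prod _ univ hpair]
  have hdvd : ∀ i c, p i ^ c ∣ m ↔ c ≤ t i := by
    intro i c
    have hw : m = p i ^ t i * (u * ∏ j ∈ univ.erase i, p j ^ t j) := by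
      rw [hm, ← Finset.mul_prod_erase univ _ (mem_univ i)]
      ring
    have hcop : Nat.Coprime (p i) (u * ∏ j ∈ univ.erase i, p j ^ t j) := by
      refine Nat.Coprime.mul_right (hu i).symm ?_
      refine Nat.Coprime.prod_right fun j hj => ?_
      refine Nat.Coprime.pow_right _ ?_
      exact (Nat.coprime_primes (hp i) (hp j)).mpr
        fun h => (Finset.mem_erase.mp hj).1 (hpinj h).symm
    constructor
    · intro hdv
      rw [hw] at hdv
      have := (Nat.Coprime.pow_left c hcop).dvd_of_dvd_mul_right hdv
      exact (Nat.pow_dvd_pow_iff_le_right (hp i).one_lt).mp this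
    · intro hc
      rw [hw]
      exact (pow_dvd_pow _ hc).mul_right _
  have hpp : ∀ i, (dft_phiF * dft_gF m) (p i ^ s i)
      = (min (t i) (s i) + 1) * Nat.totient (p i ^ s i)
        + if s i ≤ t i then p i ^ (s i - 1) else 0 := by
    intro i
    rw [← dft_G_eq]
    exact dft_G_prime_pow (p i) m (s i) (t i) (hp i) (hs i) (hdvd i)
  rw [Finset.prod_congr rfl fun i _ => hpp i]
  push_cast [apply_ite (Nat.cast : ℕ → ℂ)]
  rfl
end

section
/- For any arithmetic function f, Σ_{k=1}^n f(gcd(k,n))·e^{-2πikm/n} = Σ_{d|n} f(n/d)·c_d(m), where c_d(m) = Σ_{k=1, gcd(k,d)=1}^d e^{2πikm/d} is the Ramanujan sum; i.e., the DFT of f of the gcd equals the Dirichlet convolution of f with the Ramanujan sum m ↦ c_·(m). -/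
open Finset

/-- The Ramanujan sum `c_d(m)`. -/
noncomputable def ramanujanSum (d m : ℕ) : ℂ :=
  ∑ k ∈ (Finset.Icc 1 d).filter (fun k => Nat.gcd k d = 1),
    Complex.exp (2 * Real.pi * Complex.I * k * m / d)

lemma exp_two_pi_nat (m : ℕ) : Complex.exp (2 * Real.pi * Complex.I * m) = 1 := by
  have := Complex.exp_int_mul_two_pi_mul_I (m : ℤ)
  rw [show ((m : ℤ) : ℂ) * (2 * ↑Real.pi * Complex.I) = 2 * Real.pi * Complex.I * m by
    push_cast; ring] at this
  exact this

lemma exp_neg_two_pi_nat (m : ℕ) : Complex.exp (-(2 * Real.pi * Complex.I * m)) = 1 := by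
  rw [Complex.exp_neg, exp_two_pi_nat, inv_one]

theorem dft_f_gcd_eq_dirichlet_conv_ramanujan (f : ℕ → ℂ) (n m : ℕ) (hn : 1 ≤ n) :
    ∑ k ∈ Finset.Icc 1 n, f (Nat.gcd k n) *
        Complex.exp (-(2 * Real.pi * Complex.I * k * m / n)) =
      ∑ d ∈ n.divisors, f (n / d) * ramanujanSum d m := by
  have hn0 : n ≠ 0 := by omega
  have hnC : (n : ℂ) ≠ 0 := Nat.cast_ne_zero.mpr hn0
  -- Step 1 : reflect `k ↦ n - k` to switch the sign in the exponential.
  have step1 : ∑ k ∈ Finset.Icc 1 n, f (Nat.gcd k n) *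
        Complex.exp (-(2 * Real.pi * Complex.I * k * m / n))
      = ∑ k ∈ Finset.Icc 1 n, f (Nat.gcd k n) *
        Complex.exp (2 * Real.pi * Complex.I * k * m / n) := by
    refine Finset.sum_nbij' (fun k => if k = n then n else n - k)
      (fun k => if k = n then n else n - k) ?_ ?_ ?_ ?_ ?_
    · intro a ha
      simp only [Finset.mem_Icc] at ha ⊢
      split_ifs with h <;> omega
    · intro a ha
      simp only [Finset.mem_Icc] at ha ⊢
      split_ifs with h <;> omega
    · intro a ha
      simp only [Finset.mem_Icc] at ha
      split_ifs with h1 h2 <;> omega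
    · intro a ha
      simp only [Finset.mem_Icc] at ha
      split_ifs with h1 h2 <;> omega
    · intro a ha
      simp only [Finset.mem_Icc] at ha
      by_cases h : a = n
      · rw [if_pos h, h]
        congr 1
        rw [show (2 * Real.pi * Complex.I * (n : ℂ) * m / n)
            = 2 * Real.pi * Complex.I * (m : ℂ) * ((n : ℂ) / n) by ring,
          div_self hnC, mul_one, exp_two_pi_nat]
        exact exp_neg_two_pi_nat m
      · rw [if_neg h]
        have hle : a ≤ n := ha.2
        have hg : Nat.gcd (n - a) n = Nat.gcd a n := Nat.gcd_self_sub_left hle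
        rw [hg]
        congr 1
        have hc : ((n - a : ℕ) : ℂ) = (n : ℂ) - a := by
          push_cast [Nat.cast_sub hle]; ring
        rw [hc]
        rw [show (2 * Real.pi * Complex.I * ((n : ℂ) - a) * m / n)
            = 2 * Real.pi * Complex.I * (m : ℂ) * ((n : ℂ) / n)
              + -(2 * Real.pi * Complex.I * a * m / n) by ring]
        rw [div_self hnC, mul_one, Complex.exp_add, exp_two_pi_nat, one_mul]
  rw [step1]
  -- Step 2 : fiber the sum over `d = n / gcd k n`.
  rw [← Finset.sum_fiberwise_of_maps_to (g := fun k => n / Nat.gcd k n) (t := n.divisors)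
    (fun k hk => by
      simp only [Finset.mem_Icc] at hk
      exact Nat.mem_divisors.mpr ⟨Nat.div_dvd_of_dvd (Nat.gcd_dvd_right k n), hn0⟩)]
  refine Finset.sum_congr rfl fun d hd => ?_
  obtain ⟨hdvd, -⟩ := Nat.mem_divisors.mp hd
  have hd0 : d ≠ 0 := by
    rintro rfl; exact hn0 (Nat.eq_zero_of_zero_dvd hdvd)
  set g := n / d with hgdef
  have hgmul : g * d = n := Nat.div_mul_cancel hdvd
  have hg0 : g ≠ 0 := by
    rintro h; rw [h, zero_mul] at hgmul; exact hn0 hgmul.symm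
  have hgC : (g : ℂ) ≠ 0 := Nat.cast_ne_zero.mpr hg0
  have hdC : (d : ℂ) ≠ 0 := Nat.cast_ne_zero.mpr hd0
  have key : ∀ k ∈ (Finset.Icc 1 n).filter (fun k => n / Nat.gcd k n = d),
      Nat.gcd k n = g := by
    intro k hk
    simp only [Finset.mem_filter, Finset.mem_Icc] at hk
    have hgd : Nat.gcd k n ∣ n := Nat.gcd_dvd_right k n
    rw [hgdef, ← hk.2, Nat.div_div_self hgd hn0]
  rw [ramanujanSum, Finset.mul_sum]
  refine Finset.sum_nbij' (fun k => k / g) (fun j => g * j) ?_ ?_ ?_ ?_ ?_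
  · intro k hk
    have hgcd := key k hk
    simp only [Finset.mem_filter, Finset.mem_Icc] at hk ⊢
    have hgk : g ∣ k := hgcd ▸ Nat.gcd_dvd_left k n
    obtain ⟨j, rfl⟩ := hgk
    rw [Nat.mul_div_cancel_left j (Nat.pos_of_ne_zero hg0)]
    have hj0 : j ≠ 0 := by
      rintro rfl
      rw [mul_zero] at hk
      omega
    have h1 : 1 ≤ j := Nat.pos_of_ne_zero hj0
    have h2 : j ≤ d := by
      have : g * j ≤ g * d := hgmul ▸ hk.1.2
      exact Nat.le_of_mul_le_mul_left this (Nat.pos_of_ne_zero hg0)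
    refine ⟨⟨h1, h2⟩, ?_⟩
    have hmg : Nat.gcd (g * j) (g * d) = g * Nat.gcd j d := Nat.gcd_mul_left g j d
    rw [hgmul, hgcd] at hmg
    have := Nat.eq_of_mul_eq_mul_left (Nat.pos_of_ne_zero hg0)
      (by rw [← hmg, mul_one] : g * 1 = g * Nat.gcd j d)
    omega
  · intro j hj
    simp only [Finset.mem_filter, Finset.mem_Icc] at hj ⊢
    obtain ⟨⟨h1, h2⟩, hcop⟩ := hj
    constructor
    · constructor
      · exact Nat.one_le_iff_ne_zero.mpr (by positivity)
      · calc g * j ≤ g * d := Nat.mul_le_mul_left g h2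
          _ = n := hgmul
    · have hgn : Nat.gcd (g * j) n = g := by
        rw [← hgmul, Nat.gcd_mul_left, hcop, mul_one]
      rw [hgn, hgdef, Nat.div_div_self hdvd hn0]
  · intro k hk
    have hgcd := key k hk
    have hgk : g ∣ k := hgcd ▸ Nat.gcd_dvd_left k n
    exact Nat.mul_div_cancel' hgk
  · intro j hj
    exact Nat.mul_div_cancel_left j (Nat.pos_of_ne_zero hg0)
  · intro k hk
    have hgcd := key k hk
    have hgk : g ∣ k := hgcd ▸ Nat.gcd_dvd_left k n
    obtain ⟨j, rfl⟩ := hgk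
    rw [Nat.mul_div_cancel_left j (Nat.pos_of_ne_zero hg0), hgcd]
    congr 1
    have hcast : ((g * j : ℕ) : ℂ) = (g : ℂ) * j := by push_cast; ring
    rw [hcast, ← hgmul]
    have h2 : ((g * d : ℕ) : ℂ) = (g : ℂ) * d := by push_cast; ring
    rw [h2]
    congr 1
    rw [div_eq_div_iff (mul_ne_zero hgC hdC) hdC]
    ring
end

section
/- If gcd(m,n) = 1, then Σ_{k=1}^n gcd(k,n)·e^{-2πikm/n} = φ(n), the Euler totient function of n. -/
open Finset

theorem dft_gcd_coprime_eq_totient (n m : ℕ) (hn : 1 ≤ n) (hm : 1 ≤ m)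
    (h : Nat.gcd m n = 1) :
    ∑ k ∈ Finset.Icc 1 n, (Nat.gcd k n : ℂ) *
        Complex.exp (-(2 * Real.pi * Complex.I * k * m / n)) =
      (Nat.totient n : ℂ) := by
  have hn0 : n ≠ 0 := by omega
  set ζ : ℂ := Complex.exp (-(2 * Real.pi * Complex.I * m / n)) with hζdef
  have hζ : ζ = ((Complex.exp (2 * Real.pi * Complex.I / n)) ^ m)⁻¹ := by
    rw [← Complex.exp_nat_mul, ← Complex.exp_neg, hζdef]
    congr 1; ring
  have hprim : IsPrimitiveRoot ζ n := by
    rw [hζ]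
    exact (((Complex.isPrimitiveRoot_exp n hn0).pow_iff_coprime (by omega) m).mpr h).inv
  have hexp : ∀ k : ℕ, Complex.exp (-(2 * Real.pi * Complex.I * k * m / n)) = ζ ^ k := by
    intro k
    rw [hζdef, ← Complex.exp_nat_mul]
    congr 1; ring
  have hgcd : ∀ k ∈ Finset.Icc 1 n, (Nat.gcd k n : ℂ) =
      ∑ d ∈ n.divisors, (if d ∣ k then (Nat.totient d : ℂ) else 0) := by
    intro k _
    have h1 : (n.divisors.filter (· ∣ k)) = (Nat.gcd k n).divisors := by
      rw [← Nat.divisors_filter_dvd_of_dvd hn0 (Nat.gcd_dvd_right k n)]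
      apply Finset.filter_congr
      intro d hd
      have hdn : d ∣ n := (Nat.mem_divisors.mp hd).1
      simp [Nat.dvd_gcd_iff, hdn]
    calc (Nat.gcd k n : ℂ)
        = ((∑ d ∈ (Nat.gcd k n).divisors, Nat.totient d : ℕ) : ℂ) := by
          rw [Nat.sum_totient]
      _ = ∑ d ∈ (Nat.gcd k n).divisors, (Nat.totient d : ℂ) := by push_cast; rfl
      _ = ∑ d ∈ n.divisors.filter (· ∣ k), (Nat.totient d : ℂ) := by rw [h1]
      _ = ∑ d ∈ n.divisors, (if d ∣ k then (Nat.totient d : ℂ) else 0) := by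
          rw [Finset.sum_filter]
  calc ∑ k ∈ Finset.Icc 1 n, (Nat.gcd k n : ℂ) *
        Complex.exp (-(2 * Real.pi * Complex.I * k * m / n))
      = ∑ k ∈ Finset.Icc 1 n, ∑ d ∈ n.divisors,
          (if d ∣ k then (Nat.totient d : ℂ) else 0) * ζ ^ k := by
        refine Finset.sum_congr rfl fun k hk => ?_
        rw [hexp k, hgcd k hk, Finset.sum_mul]
    _ = ∑ d ∈ n.divisors, ∑ k ∈ Finset.Icc 1 n,
          (if d ∣ k then (Nat.totient d : ℂ) else 0) * ζ ^ k := Finset.sum_comm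
    _ = ∑ d ∈ n.divisors, (Nat.totient d : ℂ) * ∑ j ∈ Finset.Icc 1 (n / d), (ζ ^ d) ^ j := by
        refine Finset.sum_congr rfl fun d hd => ?_
        obtain ⟨hdn, -⟩ := Nat.mem_divisors.mp hd
        have hd0 : 0 < d := Nat.pos_of_dvd_of_pos hdn (by omega)
        have hite : ∀ k : ℕ, (if d ∣ k then (Nat.totient d : ℂ) else 0) * ζ ^ k
            = if d ∣ k then (Nat.totient d : ℂ) * ζ ^ k else 0 := by
          intro k; split <;> simp
        simp_rw [hite]
        rw [← Finset.sum_filter]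
        have himg : (Finset.Icc 1 n).filter (fun k => d ∣ k)
            = (Finset.Icc 1 (n / d)).image (fun j => d * j) := by
          ext k
          simp only [Finset.mem_filter, Finset.mem_image, Finset.mem_Icc]
          constructor
          · rintro ⟨⟨h1, h2⟩, j, rfl⟩
            refine ⟨j, ⟨by nlinarith, ?_⟩, rfl⟩
            rw [Nat.le_div_iff_mul_le hd0, mul_comm]
            exact h2
          · rintro ⟨j, ⟨hj1, hj2⟩, rfl⟩
            rw [Nat.le_div_iff_mul_le hd0] at hj2
            exact ⟨⟨by nlinarith, by rw [mul_comm]; exact hj2⟩, j, rfl⟩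
        rw [himg, Finset.sum_image (fun a _ b _ hab =>
          Nat.eq_of_mul_eq_mul_left hd0 hab)]
        rw [Finset.mul_sum]
        refine Finset.sum_congr rfl fun j _ => ?_
        rw [pow_mul]
    _ = (Nat.totient n : ℂ) := by
        rw [Finset.sum_eq_single_of_mem n (Nat.mem_divisors_self n hn0)]
        · rw [Nat.div_self (by omega), hprim.pow_eq_one]
          simp
        · intro d hd hdn
          obtain ⟨hddvd, -⟩ := Nat.mem_divisors.mp hd
          have hd0 : 0 < d := Nat.pos_of_dvd_of_pos hddvd (by omega)
          have hx1 : ζ ^ d ≠ 1 := by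
            intro hone
            exact hdn (Nat.dvd_antisymm hddvd ((hprim.pow_eq_one_iff_dvd d).mp hone))
          have hxN : (ζ ^ d) ^ (n / d) = 1 := by
            rw [← pow_mul, Nat.mul_div_cancel' hddvd, hprim.pow_eq_one]
          have hIcc : Finset.Icc 1 (n / d) = (Finset.range (n / d)).image (fun j => j + 1) := by
            ext k
            simp only [Finset.mem_Icc, Finset.mem_image, Finset.mem_range]
            constructor
            · rintro ⟨h1, h2⟩; exact ⟨k - 1, by omega, by omega⟩
            · rintro ⟨j, hj, rfl⟩; omega
          rw [hIcc, Finset.sum_image (fun a _ b _ hab => by omega)]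
          have : ∑ j ∈ Finset.range (n / d), (ζ ^ d) ^ (j + 1)
              = ζ ^ d * ∑ j ∈ Finset.range (n / d), (ζ ^ d) ^ j := by
            rw [Finset.mul_sum]
            exact Finset.sum_congr rfl fun j _ => by ring
          rw [this, geom_sum_eq hx1, hxN]
          simp
end

section
/- For a prime p with s ≥ 1 and gcd(m, p^s) = 1, Σ_{k=1}^{p^s} gcd(k, p^s)·e^{-2πikm/p^s} = φ(p^s) = p^s - p^{s-1}. -/
open Finset

theorem dft_gcd_prime_power_coprime (p s m : ℕ) (hp : p.Prime) (hs : 1 ≤ s)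
    (hm : Nat.gcd m (p ^ s) = 1) :
    (∑ k ∈ Finset.Icc 1 (p ^ s), (Nat.gcd k (p ^ s) : ℂ) *
        Complex.exp (-(2 * Real.pi * Complex.I * k * m / (p ^ s))) =
      (Nat.totient (p ^ s) : ℂ)) ∧
    (Nat.totient (p ^ s) : ℂ) = (p : ℂ) ^ s - (p : ℂ) ^ (s - 1) := by
  have hn0 : 0 < p ^ s := pow_pos hp.pos s
  have hc : ((p ^ s : ℕ) : ℂ) = (p : ℂ) ^ s := by push_cast; ring
  set ζ : ℂ := Complex.exp (-(2 * Real.pi * Complex.I * m / (p : ℂ) ^ s)) with hζ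
  have hprim : IsPrimitiveRoot ζ (p ^ s) := by
    have h := Complex.isPrimitiveRoot_exp_of_coprime m (p ^ s) hn0.ne' hm
    have he : ζ = (Complex.exp (2 * Real.pi * Complex.I * (m / ((p ^ s : ℕ) : ℂ))))⁻¹ := by
      rw [hζ, ← Complex.exp_neg]
      congr 1
      rw [hc]
      ring
    rw [he]
    exact h.inv
  have hζn : ζ ^ (p ^ s) = 1 := hprim.pow_eq_one
  have hpow : ∀ k : ℕ,
      Complex.exp (-(2 * Real.pi * Complex.I * k * m / (p : ℂ) ^ s)) = ζ ^ k := by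
    intro k
    rw [hζ, ← Complex.exp_nat_mul]
    congr 1
    ring
  constructor
  · have step1 : ∀ k ∈ Icc 1 (p ^ s), (Nat.gcd k (p ^ s) : ℂ) =
        ∑ d ∈ (p ^ s).divisors, if d ∣ k then (Nat.totient d : ℂ) else 0 := by
      intro k hk
      have hdiv : (Nat.gcd k (p ^ s)).divisors = (p ^ s).divisors.filter (· ∣ k) := by
        ext d
        simp only [Nat.mem_divisors, Finset.mem_filter, Nat.dvd_gcd_iff]
        constructor
        · rintro ⟨⟨h1, h2⟩, -⟩; exact ⟨⟨h2, hn0.ne'⟩, h1⟩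
        · rintro ⟨⟨h2, -⟩, h1⟩
          exact ⟨⟨h1, h2⟩, Nat.gcd_ne_zero_right hn0.ne'⟩
      calc (Nat.gcd k (p ^ s) : ℂ)
          = ((∑ d ∈ (Nat.gcd k (p ^ s)).divisors, Nat.totient d : ℕ) : ℂ) := by
            rw [Nat.sum_totient]
        _ = ∑ d ∈ (p ^ s).divisors, if d ∣ k then (Nat.totient d : ℂ) else 0 := by
            rw [hdiv, Finset.sum_filter]
            push_cast
            rfl
    have inner : ∀ d ∈ (p ^ s).divisors,
        ∑ k ∈ (Icc 1 (p ^ s)).filter (d ∣ ·), ζ ^ k = if d = p ^ s then 1 else 0 := by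
      intro d hd
      rw [Nat.mem_divisors] at hd
      obtain ⟨hdvd, -⟩ := hd
      have hd0 : 0 < d := Nat.pos_of_dvd_of_pos hdvd hn0
      have hre : ∑ k ∈ (Icc 1 (p ^ s)).filter (d ∣ ·), ζ ^ k
          = ∑ t ∈ Icc 1 (p ^ s / d), (ζ ^ d) ^ t := by
        rw [Finset.sum_nbij' (i := fun k => k / d) (j := fun t => d * t)]
        · intro k hk
          simp only [mem_filter, mem_Icc] at hk
          obtain ⟨⟨h1, h2⟩, hdk⟩ := hk
          simp only [mem_Icc]
          exact ⟨(Nat.one_le_div_iff hd0).2 (Nat.le_of_dvd h1 hdk),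
            Nat.div_le_div_right h2⟩
        · intro t ht
          simp only [mem_Icc] at ht
          simp only [mem_filter, mem_Icc]
          refine ⟨⟨Nat.mul_pos hd0 ht.1, ?_⟩, Dvd.intro t rfl⟩
          calc d * t ≤ d * (p ^ s / d) := Nat.mul_le_mul_left d ht.2
            _ = p ^ s := Nat.mul_div_cancel' hdvd
        · intro k hk
          simp only [mem_filter] at hk
          exact Nat.mul_div_cancel' hk.2
        · intro t _
          exact Nat.mul_div_cancel_left t hd0
        · intro k hk
          simp only [mem_filter] at hk
          rw [← pow_mul, Nat.mul_div_cancel' hk.2]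
      rw [hre]
      have hxc : (ζ ^ d) ^ (p ^ s / d) = 1 := by
        rw [← pow_mul, Nat.mul_div_cancel' hdvd, hζn]
      by_cases hdn : d = p ^ s
      · subst hdn
        rw [Nat.div_self hd0]
        simp [hζn]
      · simp only [hdn, if_false]
        have hx1 : ζ ^ d ≠ 1 := by
          intro h
          exact hdn (Nat.dvd_antisymm hdvd ((hprim.pow_eq_one_iff_dvd d).1 h))
        rw [← Finset.Ico_add_one_right_eq_Icc, Finset.sum_Ico_eq_sum_range]
        simp only [Nat.add_sub_cancel]
        have hsplit : ∀ i : ℕ, (ζ ^ d) ^ (1 + i) = ζ ^ d * (ζ ^ d) ^ i := by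
          intro i; rw [pow_add, pow_one]
        rw [Finset.sum_congr rfl fun i _ => hsplit i, ← Finset.mul_sum,
          geom_sum_eq hx1, hxc]
        simp
    calc ∑ k ∈ Icc 1 (p ^ s), (Nat.gcd k (p ^ s) : ℂ) *
          Complex.exp (-(2 * Real.pi * Complex.I * k * m / (p : ℂ) ^ s))
        = ∑ k ∈ Icc 1 (p ^ s), ∑ d ∈ (p ^ s).divisors,
            (if d ∣ k then (Nat.totient d : ℂ) * ζ ^ k else 0) := by
          refine sum_congr rfl fun k hk => ?_
          rw [step1 k hk, hpow k, Finset.sum_mul]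
          exact sum_congr rfl fun d _ => by rw [ite_mul, zero_mul]
      _ = ∑ d ∈ (p ^ s).divisors, ∑ k ∈ Icc 1 (p ^ s),
            (if d ∣ k then (Nat.totient d : ℂ) * ζ ^ k else 0) := Finset.sum_comm
      _ = ∑ d ∈ (p ^ s).divisors, (Nat.totient d : ℂ) *
            ∑ k ∈ (Icc 1 (p ^ s)).filter (d ∣ ·), ζ ^ k := by
          refine sum_congr rfl fun d _ => ?_
          rw [← Finset.sum_filter, Finset.mul_sum]
      _ = ∑ d ∈ (p ^ s).divisors, (if d = p ^ s then (Nat.totient d : ℂ) else 0) := by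
          refine sum_congr rfl fun d hd => ?_
          rw [inner d hd]
          simp [mul_ite]
      _ = (Nat.totient (p ^ s) : ℂ) := by
          rw [Finset.sum_ite_eq' (p ^ s).divisors (p ^ s) (fun d => (Nat.totient d : ℂ)),
            if_pos (Nat.mem_divisors_self (p ^ s) hn0.ne')]
  · rw [Nat.totient_prime_pow hp hs]
    obtain ⟨t, rfl⟩ : ∃ t, s = t + 1 := ⟨s - 1, (Nat.succ_pred_eq_of_pos hs).symm⟩
    simp only [Nat.add_sub_cancel]
    push_cast [Nat.cast_sub hp.one_le]
    ring
end

section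
/- Let f be a multiplicative function, n = ∏_{i=1}^r p_i^{s_i} with s_i ≥ 1, and m = u·∏_{i=1}^r p_i^{t_i} with gcd(u,p_i)=1. Then Σ_{k=1}^n f(gcd(k,n))·e^{-2πikm/n} = ∏_{i=1}^r [ f(p_i^{s_i}) + (p_i - 1)·Σ_{b=1}^{min(t_i,s_i)} p_i^{b-1}·f(p_i^{s_i - b}) − f(p_i^{s_i - t_i - 1})·p_i^{t_i}·(1 − [t_i ≥ s_i]) ]. -/
open Finset Complex

lemma expNatOne (j : ℕ) : Complex.exp (-(2 * Real.pi * Complex.I * (j:ℂ))) = 1 := by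
  have := Complex.exp_int_mul_two_pi_mul_I (-(j:ℤ))
  rw [← this]; push_cast; ring_nf

lemma Egeom (q m : ℕ) (hq : 0 < q) :
    ∑ k ∈ range q, Complex.exp (-(2 * Real.pi * Complex.I * (k:ℂ) * (m:ℂ) / (q:ℂ))) =
      if q ∣ m then (q:ℂ) else 0 := by
  have hq0 : (q:ℂ) ≠ 0 := Nat.cast_ne_zero.mpr hq.ne'
  have hterm : ∀ k : ℕ, Complex.exp (-(2 * Real.pi * Complex.I * (k:ℂ) * (m:ℂ) / (q:ℂ)))
      = Complex.exp (-(2 * Real.pi * Complex.I * (m:ℂ) / (q:ℂ))) ^ k := by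
    intro k
    rw [← Complex.exp_nat_mul]
    ring_nf
  by_cases hdvd : q ∣ m
  · rw [if_pos hdvd]
    obtain ⟨d, rfl⟩ := hdvd
    simp only [hterm]
    have h1 : Complex.exp (-(2 * Real.pi * Complex.I * ((q*d:ℕ):ℂ) / (q:ℂ))) = 1 := by
      push_cast
      rw [show -(2 * (Real.pi:ℂ) * Complex.I * ((q:ℂ) * (d:ℂ)) / (q:ℂ))
          = -(2 * (Real.pi:ℂ) * Complex.I * (d:ℂ)) * ((q:ℂ)/(q:ℂ)) by ring,
        div_self hq0, mul_one]
      exact expNatOne d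
    push_cast at h1 ⊢
    simp [h1]
  · rw [if_neg hdvd]
    simp only [hterm]
    have hζ : Complex.exp (-(2 * Real.pi * Complex.I * (m:ℂ) / (q:ℂ))) ≠ 1 := by
      intro h
      rw [Complex.exp_eq_one_iff] at h
      obtain ⟨z, hz⟩ := h
      apply hdvd
      have h2 : (2 * (Real.pi:ℂ) * Complex.I) ≠ 0 := by
        simp [Real.pi_ne_zero, Complex.I_ne_zero]
      have hmc : (m:ℂ) = ((-z * q : ℤ):ℂ) := by
        push_cast
        field_simp at hz
        apply mul_left_cancel₀ h2
        linear_combination (-(2 * (Real.pi:ℂ) * Complex.I)) * hz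
      have hmz : (m:ℤ) = -z * q := by exact_mod_cast hmc
      have : (q:ℤ) ∣ (m:ℤ) := ⟨-z, by linarith [hmz]⟩
      exact_mod_cast this
    rw [geom_sum_eq hζ]
    have h3 : Complex.exp (-(2 * Real.pi * Complex.I * (m:ℂ) / (q:ℂ))) ^ q = 1 := by
      rw [← Complex.exp_nat_mul]
      rw [show (q:ℂ) * (-(2 * Real.pi * Complex.I * (m:ℂ) / (q:ℂ)))
          = -(2 * (Real.pi:ℂ) * Complex.I * (m:ℂ)) * ((q:ℂ)/(q:ℂ)) by ring,
        div_self hq0, mul_one]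
      exact expNatOne m
    rw [h3, sub_self, zero_div]

lemma Emod (x N m : ℕ) (hN : 0 < N) :
    Complex.exp (-(2 * Real.pi * Complex.I * ((x % N : ℕ):ℂ) * (m:ℂ) / (N:ℂ))) =
    Complex.exp (-(2 * Real.pi * Complex.I * (x:ℂ) * (m:ℂ) / (N:ℂ))) := by
  have hN0 : (N:ℂ) ≠ 0 := Nat.cast_ne_zero.mpr hN.ne'
  have hx : (x:ℂ) = ((N * (x / N) + x % N : ℕ):ℂ) := by
    rw [Nat.div_add_mod]
  rw [hx]
  push_cast
  rw [show -(2 * (Real.pi:ℂ) * Complex.I * ((N:ℂ) * ((x/N:ℕ):ℂ) + ((x%N:ℕ):ℂ)) * (m:ℂ) / (N:ℂ))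
      = -(2 * (Real.pi:ℂ) * Complex.I * (((x/N:ℕ):ℂ) * (m:ℂ))) * ((N:ℂ)/(N:ℂ))
        + -(2 * (Real.pi:ℂ) * Complex.I * ((x%N:ℕ):ℂ) * (m:ℂ) / (N:ℂ)) by ring,
    div_self hN0, mul_one, Complex.exp_add]
  have h1 : Complex.exp (-(2 * (Real.pi:ℂ) * Complex.I * (((x/N:ℕ):ℂ) * (m:ℂ)))) = 1 := by
    have := expNatOne (x / N * m)
    push_cast at this
    rw [← this]
  rw [h1, one_mul]

lemma Smult (f : ℕ → ℂ) (hf : ∀ a b : ℕ, Nat.Coprime a b → f (a * b) = f a * f b)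
    (n1 n2 m : ℕ) (h1 : 0 < n1) (h2 : 0 < n2) (hco : Nat.Coprime n1 n2) :
    ∑ k ∈ range (n1 * n2), f (Nat.gcd k (n1 * n2)) *
      Complex.exp (-(2 * Real.pi * Complex.I * (k:ℂ) * (m:ℂ) / ((n1 * n2 : ℕ):ℂ))) =
    (∑ k ∈ range n1, f (Nat.gcd k n1) *
      Complex.exp (-(2 * Real.pi * Complex.I * (k:ℂ) * (m:ℂ) / (n1:ℂ)))) *
    (∑ k ∈ range n2, f (Nat.gcd k n2) *
      Complex.exp (-(2 * Real.pi * Complex.I * (k:ℂ) * (m:ℂ) / (n2:ℂ)))) := by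
  have hN : 0 < n1 * n2 := Nat.mul_pos h1 h2
  have hn10 : (n1:ℂ) ≠ 0 := Nat.cast_ne_zero.mpr h1.ne'
  have hn20 : (n2:ℂ) ≠ 0 := Nat.cast_ne_zero.mpr h2.ne'
  rw [Finset.sum_mul_sum, ← Finset.sum_product']
  symm
  refine Finset.sum_bij (fun x _ => (x.1 * n2 + x.2 * n1) % (n1 * n2)) ?_ ?_ ?_ ?_
  · intro x _
    exact Finset.mem_range.mpr (Nat.mod_lt _ hN)
  · -- injectivity
    intro x hx y hy hxy
    have hx1 := (Finset.mem_product.mp hx).1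
    have hx2 := (Finset.mem_product.mp hx).2
    have hy1 := (Finset.mem_product.mp hy).1
    have hy2 := (Finset.mem_product.mp hy).2
    rw [Finset.mem_range] at hx1 hx2 hy1 hy2
    have key : ∀ (a b c d e N2 N1 : ℕ), 0 < N1 → a < N1 → c < N1 → Nat.Coprime N1 N2 →
        (a * N2 + b * N1) % (N1 * N2) = (c * N2 + d * N1) % (N1 * N2) → a = c := by
      intro a b c d e N2 N1 hN1 ha hc hcop heq
      have hmod : (a * N2 + b * N1) % N1 = (c * N2 + d * N1) % N1 := by
        have d1 : N1 ∣ N1 * N2 := dvd_mul_right _ _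
        calc (a * N2 + b * N1) % N1 = ((a * N2 + b * N1) % (N1*N2)) % N1 :=
              (Nat.mod_mod_of_dvd _ d1).symm
          _ = ((c * N2 + d * N1) % (N1*N2)) % N1 := by rw [heq]
          _ = (c * N2 + d * N1) % N1 := Nat.mod_mod_of_dvd _ d1
      rw [Nat.add_mul_mod_self_right, Nat.add_mul_mod_self_right] at hmod
      have : a ≡ c [MOD N1] := Nat.ModEq.cancel_right_of_coprime hcop (hmod : _)
      rwa [Nat.ModEq, Nat.mod_eq_of_lt ha, Nat.mod_eq_of_lt hc] at this
    have ha : x.1 = y.1 := key x.1 x.2 y.1 y.2 0 n2 n1 h1 hx1 hy1 hco hxy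
    have hb : x.2 = y.2 := by
      refine key x.2 x.1 y.2 y.1 0 n1 n2 h2 hx2 hy2 hco.symm ?_
      rw [mul_comm n2 n1, add_comm (x.2 * n1), add_comm (y.2 * n1)]
      exact hxy
    exact Prod.ext ha hb
  · -- surjectivity
    intro b hb
    have hinj : ∀ (x y : ℕ × ℕ), x ∈ range n1 ×ˢ range n2 → y ∈ range n1 ×ˢ range n2 →
        (x.1 * n2 + x.2 * n1) % (n1 * n2) = (y.1 * n2 + y.2 * n1) % (n1 * n2) → x = y := by
      intro x y hx hy hxy
      have hx1 := Finset.mem_range.mp (Finset.mem_product.mp hx).1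
      have hx2 := Finset.mem_range.mp (Finset.mem_product.mp hx).2
      have hy1 := Finset.mem_range.mp (Finset.mem_product.mp hy).1
      have hy2 := Finset.mem_range.mp (Finset.mem_product.mp hy).2
      have key : ∀ (a b c d N2 N1 : ℕ), 0 < N1 → a < N1 → c < N1 → Nat.Coprime N1 N2 →
          (a * N2 + b * N1) % (N1 * N2) = (c * N2 + d * N1) % (N1 * N2) → a = c := by
        intro a b c d N2 N1 hN1 ha' hc hcop heq
        have hmod : (a * N2 + b * N1) % N1 = (c * N2 + d * N1) % N1 := by
          have d1 : N1 ∣ N1 * N2 := dvd_mul_right _ _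
          calc (a * N2 + b * N1) % N1 = ((a * N2 + b * N1) % (N1*N2)) % N1 :=
                (Nat.mod_mod_of_dvd _ d1).symm
            _ = ((c * N2 + d * N1) % (N1*N2)) % N1 := by rw [heq]
            _ = (c * N2 + d * N1) % N1 := Nat.mod_mod_of_dvd _ d1
        rw [Nat.add_mul_mod_self_right, Nat.add_mul_mod_self_right] at hmod
        have : a ≡ c [MOD N1] := Nat.ModEq.cancel_right_of_coprime hcop hmod
        rwa [Nat.ModEq, Nat.mod_eq_of_lt ha', Nat.mod_eq_of_lt hc] at this
      have ha' : x.1 = y.1 := key x.1 x.2 y.1 y.2 n2 n1 h1 hx1 hy1 hco hxy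
      have hb' : x.2 = y.2 := by
        refine key x.2 x.1 y.2 y.1 n1 n2 h2 hx2 hy2 hco.symm ?_
        rw [mul_comm n2 n1, add_comm (x.2 * n1), add_comm (y.2 * n1)]
        exact hxy
      exact Prod.ext ha' hb'
    obtain ⟨a, ha, hab⟩ := Finset.surj_on_of_inj_on_of_card_le
      (fun (x : ℕ × ℕ) (_ : x ∈ range n1 ×ˢ range n2) => (x.1 * n2 + x.2 * n1) % (n1 * n2))
      (fun x _ => Finset.mem_range.mpr (Nat.mod_lt _ hN))
      (fun x y hx hy hxy => hinj x y hx hy hxy) (by simp) b hb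
    exact ⟨a, ha, hab.symm⟩
  · -- values agree
    intro x hx
    set X := x.1 * n2 + x.2 * n1 with hX
    have hg : Nat.gcd (X % (n1*n2)) (n1*n2) = Nat.gcd x.1 n1 * Nat.gcd x.2 n2 := by
      rw [← Nat.gcd_rec, Nat.gcd_comm, Nat.Coprime.gcd_mul _ hco]
      congr 1
      · rw [hX, Nat.gcd_add_mul_right_left, Nat.Coprime.gcd_mul_right_cancel _ hco.symm]
      · rw [hX, add_comm, Nat.gcd_add_mul_right_left, Nat.Coprime.gcd_mul_right_cancel _ hco]
    have hcopg : Nat.Coprime (Nat.gcd x.1 n1) (Nat.gcd x.2 n2) :=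
      Nat.Coprime.coprime_dvd_left (Nat.gcd_dvd_right _ _)
        (Nat.Coprime.coprime_dvd_right (Nat.gcd_dvd_right _ _) hco)
    have hexp : Complex.exp (-(2 * Real.pi * Complex.I * ((X % (n1*n2) : ℕ):ℂ) * (m:ℂ) / ((n1*n2 : ℕ):ℂ)))
        = Complex.exp (-(2 * Real.pi * Complex.I * (x.1:ℂ) * (m:ℂ) / (n1:ℂ))) *
          Complex.exp (-(2 * Real.pi * Complex.I * (x.2:ℂ) * (m:ℂ) / (n2:ℂ))) := by
      rw [Emod _ _ _ hN, ← Complex.exp_add]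
      congr 1
      rw [hX]
      push_cast
      field_simp
      ring
    rw [hg, hf _ _ hcopg, hexp]
    ring

lemma sum_dvd_filter (p N : ℕ) (hp : 0 < p) (F : ℕ → ℂ) :
    ∑ k ∈ (range (p*N)).filter (p ∣ ·), F k = ∑ k ∈ range N, F (p * k) := by
  symm
  refine Finset.sum_nbij' (fun k => p * k) (fun k => k / p) ?_ ?_ ?_ ?_ ?_
  · intro a ha
    simp only [Finset.mem_filter, Finset.mem_range] at *
    exact ⟨Nat.mul_lt_mul_left hp |>.mpr ha, dvd_mul_right _ _⟩
  · intro a ha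
    simp only [Finset.mem_filter, Finset.mem_range] at *
    obtain ⟨h1, c, rfl⟩ := ha
    rw [Nat.mul_div_cancel_left _ hp]
    exact lt_of_mul_lt_mul_left h1 (Nat.zero_le p)
  · intro a _; exact Nat.mul_div_cancel_left _ hp
  · intro a ha
    simp only [Finset.mem_filter] at ha
    exact Nat.mul_div_cancel' ha.2
  · intro a _; rfl

lemma Hrec (f : ℕ → ℂ) (p s m t a : ℕ) (hp : p.Prime)
    (hdvd : ∀ b : ℕ, p ^ b ∣ m ↔ b ≤ t) (ha1 : 1 ≤ a) (has : a ≤ s) :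
    ∑ k ∈ range (p ^ a), f (p ^ (s - a) * Nat.gcd k (p ^ a)) *
        Complex.exp (-(2 * Real.pi * Complex.I * (k:ℂ) * (m:ℂ) / ((p ^ a : ℕ):ℂ))) =
    (∑ k ∈ range (p ^ (a-1)), f (p ^ (s - (a-1)) * Nat.gcd k (p ^ (a-1))) *
        Complex.exp (-(2 * Real.pi * Complex.I * (k:ℂ) * (m:ℂ) / ((p ^ (a-1) : ℕ):ℂ))))
      + f (p ^ (s - a)) *
        ((if a ≤ t then ((p:ℂ)) ^ a else 0) - (if a - 1 ≤ t then ((p:ℂ)) ^ (a-1) else 0)) := by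
  have hp0 : 0 < p := hp.pos
  have hpc0 : (p:ℂ) ≠ 0 := Nat.cast_ne_zero.mpr hp0.ne'
  have hpow : p ^ a = p * p ^ (a - 1) := by
    conv_lhs => rw [show a = (a-1) + 1 by omega]
    rw [pow_succ]; ring
  have hppos : 0 < p ^ (a-1) := Nat.pow_pos hp0
  have hEpk : ∀ k : ℕ,
      Complex.exp (-(2 * Real.pi * Complex.I * ((p*k:ℕ):ℂ) * (m:ℂ) / ((p * p ^ (a-1) : ℕ):ℂ))) =
      Complex.exp (-(2 * Real.pi * Complex.I * (k:ℂ) * (m:ℂ) / ((p ^ (a-1) : ℕ):ℂ))) := by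
    intro k
    congr 1
    push_cast
    have h0 : ((p:ℂ)) ^ (a-1) ≠ 0 := pow_ne_zero _ hpc0
    field_simp
  rw [← Finset.sum_filter_add_sum_filter_not (range (p^a)) (p ∣ ·)]
  have hA : ∑ k ∈ (range (p^a)).filter (p ∣ ·),
      f (p ^ (s - a) * Nat.gcd k (p ^ a)) *
        Complex.exp (-(2 * Real.pi * Complex.I * (k:ℂ) * (m:ℂ) / ((p ^ a : ℕ):ℂ))) =
      ∑ k ∈ range (p ^ (a-1)), f (p ^ (s - (a-1)) * Nat.gcd k (p ^ (a-1))) *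
        Complex.exp (-(2 * Real.pi * Complex.I * (k:ℂ) * (m:ℂ) / ((p ^ (a-1) : ℕ):ℂ))) := by
    rw [show p ^ a = p * p ^ (a-1) from hpow, sum_dvd_filter p _ hp0]
    refine Finset.sum_congr rfl ?_
    intro k _
    have e2 : p ^ (s-a) * ((p*k).gcd (p * p ^ (a-1))) = p ^ (s-(a-1)) * Nat.gcd k (p ^ (a-1)) := by
      rw [Nat.gcd_mul_left, ← mul_assoc, ← pow_succ, show (s-a)+1 = s-(a-1) by omega]
    rw [e2, hEpk k]
  rw [hA]
  have hB : ∑ k ∈ (range (p^a)).filter (fun k => ¬ p ∣ k),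
      f (p ^ (s - a) * Nat.gcd k (p ^ a)) *
        Complex.exp (-(2 * Real.pi * Complex.I * (k:ℂ) * (m:ℂ) / ((p ^ a : ℕ):ℂ))) =
      f (p ^ (s - a)) *
        ((if a ≤ t then ((p:ℂ)) ^ a else 0) - (if a - 1 ≤ t then ((p:ℂ)) ^ (a-1) else 0)) := by
    have hgcd1 : ∀ k, ¬ p ∣ k → Nat.gcd k (p ^ a) = 1 := by
      intro k hk
      exact Nat.Coprime.pow_right _ ((hp.coprime_iff_not_dvd.mpr hk).symm)
    rw [Finset.sum_congr rfl (fun k hk => by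
      rw [hgcd1 k (Finset.mem_filter.mp hk).2, mul_one]), ← Finset.mul_sum]
    congr 1
    have hsplit : ∑ k ∈ (range (p^a)).filter (fun k => ¬ p ∣ k),
        Complex.exp (-(2 * Real.pi * Complex.I * (k:ℂ) * (m:ℂ) / ((p ^ a : ℕ):ℂ))) =
        (∑ k ∈ range (p^a),
          Complex.exp (-(2 * Real.pi * Complex.I * (k:ℂ) * (m:ℂ) / ((p ^ a : ℕ):ℂ))))
        - ∑ k ∈ (range (p^a)).filter (p ∣ ·),
          Complex.exp (-(2 * Real.pi * Complex.I * (k:ℂ) * (m:ℂ) / ((p ^ a : ℕ):ℂ))) := by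
      rw [← Finset.sum_filter_add_sum_filter_not (range (p^a)) (p ∣ ·)]
      ring
    rw [hsplit]
    have h1 : ∑ k ∈ range (p^a),
        Complex.exp (-(2 * Real.pi * Complex.I * (k:ℂ) * (m:ℂ) / ((p ^ a : ℕ):ℂ))) =
        if a ≤ t then ((p:ℂ)) ^ a else 0 := by
      rw [Egeom _ _ (Nat.pow_pos hp0)]
      by_cases hat : a ≤ t
      · rw [if_pos ((hdvd a).mpr hat), if_pos hat]; push_cast; rfl
      · rw [if_neg (fun hc => hat ((hdvd a).mp hc)), if_neg hat]
    have h2 : ∑ k ∈ (range (p^a)).filter (p ∣ ·),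
        Complex.exp (-(2 * Real.pi * Complex.I * (k:ℂ) * (m:ℂ) / ((p ^ a : ℕ):ℂ))) =
        if a - 1 ≤ t then ((p:ℂ)) ^ (a-1) else 0 := by
      rw [show p ^ a = p * p ^ (a-1) from hpow, sum_dvd_filter p _ hp0]
      calc ∑ k ∈ range (p ^ (a-1)),
            Complex.exp (-(2 * Real.pi * Complex.I * ((p*k:ℕ):ℂ) * (m:ℂ) / ((p * p ^ (a-1) : ℕ):ℂ)))
          = ∑ k ∈ range (p ^ (a-1)),
            Complex.exp (-(2 * Real.pi * Complex.I * (k:ℂ) * (m:ℂ) / ((p ^ (a-1) : ℕ):ℂ))) :=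
            Finset.sum_congr rfl (fun k _ => hEpk k)
        _ = if a - 1 ≤ t then ((p:ℂ)) ^ (a-1) else 0 := by
            rw [Egeom _ _ hppos]
            by_cases hat : a - 1 ≤ t
            · rw [if_pos ((hdvd (a-1)).mpr hat), if_pos hat]; push_cast; rfl
            · rw [if_neg (fun hc => hat ((hdvd (a-1)).mp hc)), if_neg hat]
    rw [h1, h2]
  rw [hB]

lemma Htel (f : ℕ → ℂ) (hf1 : f 1 = 1) (p s m t : ℕ) (hp : p.Prime)
    (hdvd : ∀ b : ℕ, p ^ b ∣ m ↔ b ≤ t) :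
    ∀ a, a ≤ s →
    ∑ k ∈ range (p ^ a), f (p ^ (s - a) * Nat.gcd k (p ^ a)) *
        Complex.exp (-(2 * Real.pi * Complex.I * (k:ℂ) * (m:ℂ) / ((p ^ a : ℕ):ℂ))) =
    f (p ^ s) + ∑ j ∈ Finset.Icc 1 a, f (p ^ (s - j)) *
        ((if j ≤ t then ((p:ℂ)) ^ j else 0) - (if j - 1 ≤ t then ((p:ℂ)) ^ (j-1) else 0)) := by
  intro a
  induction a with
  | zero =>
    intro _
    simp [Nat.gcd_comm]
  | succ a ih =>
    intro has
    have h1 : 1 ≤ a + 1 := Nat.succ_le_succ (Nat.zero_le a)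
    have := Hrec f p s m t (a+1) hp hdvd h1 has
    simp only [Nat.add_sub_cancel] at this
    rw [this, ih (le_trans (Nat.le_succ a) has), Finset.sum_Icc_succ_top h1]
    simp only [Nat.add_sub_cancel]
    ring

lemma Galg (f : ℕ → ℂ) (p s t : ℕ) (hp : 1 ≤ p) (hs : 1 ≤ s) :
    f (p ^ s) + ∑ j ∈ Finset.Icc 1 s, f (p ^ (s - j)) *
        ((if j ≤ t then ((p:ℂ)) ^ j else 0) - (if j - 1 ≤ t then ((p:ℂ)) ^ (j-1) else 0)) =
    f (p ^ s) + ((p:ℂ) - 1) * ∑ b ∈ Finset.Icc 1 (min t s),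
          (p:ℂ) ^ (b - 1) * f (p ^ (s - b)) -
        f (p ^ (s - t - 1)) * (p:ℂ) ^ t * (if s ≤ t then 0 else 1) := by
  by_cases hst : s ≤ t
  · rw [min_eq_right hst, if_pos hst, mul_zero, sub_zero, Finset.mul_sum]
    congr 1
    refine Finset.sum_congr rfl ?_
    intro j hj
    rw [Finset.mem_Icc] at hj
    rw [if_pos (le_trans hj.2 hst), if_pos (by omega)]
    have hpj : ((p:ℂ)) ^ j = ((p:ℂ)) ^ (j-1) * (p:ℂ) := by
      rw [← pow_succ]; congr 1; omega
    rw [hpj]; ring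
  · have hts : t < s := lt_of_not_ge hst
    rw [min_eq_left (le_of_lt hts), if_neg hst, mul_one]
    have hIcc : Finset.Icc 1 s = Finset.Ioc 0 s := by
      rw [← Finset.Icc_add_one_left_eq_Ioc, zero_add]
    have hIcc2 : Finset.Icc 1 t = Finset.Ioc 0 t := by
      rw [← Finset.Icc_add_one_left_eq_Ioc, zero_add]
    rw [hIcc, ← Finset.sum_Ioc_consecutive _ (Nat.zero_le t) (le_of_lt hts)]
    have hA : ∑ j ∈ Finset.Ioc 0 t, f (p ^ (s - j)) *
        ((if j ≤ t then ((p:ℂ)) ^ j else 0) - (if j - 1 ≤ t then ((p:ℂ)) ^ (j-1) else 0)) =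
        ((p:ℂ) - 1) * ∑ b ∈ Finset.Icc 1 t, (p:ℂ) ^ (b - 1) * f (p ^ (s - b)) := by
      rw [Finset.mul_sum, hIcc2]
      refine Finset.sum_congr rfl ?_
      intro j hj
      rw [Finset.mem_Ioc] at hj
      rw [if_pos hj.2, if_pos (by omega)]
      have hpj : ((p:ℂ)) ^ j = ((p:ℂ)) ^ (j-1) * (p:ℂ) := by
        rw [← pow_succ]; congr 1; omega
      rw [hpj]; ring
    have hB : ∑ j ∈ Finset.Ioc t s, f (p ^ (s - j)) *
        ((if j ≤ t then ((p:ℂ)) ^ j else 0) - (if j - 1 ≤ t then ((p:ℂ)) ^ (j-1) else 0)) =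
        - (f (p ^ (s - t - 1)) * (p:ℂ) ^ t) := by
      rw [Finset.sum_eq_single_of_mem (t+1) (Finset.mem_Ioc.mpr ⟨Nat.lt_succ_self t, hts⟩)]
      · rw [if_neg (by omega), if_pos (by omega)]
        simp only [Nat.add_sub_cancel]
        rw [Nat.sub_sub]
        ring
      · intro j hj hne
        rw [Finset.mem_Ioc] at hj
        rw [if_neg (by omega), if_neg (by omega)]
        ring
    rw [hA, hB]
    ring

lemma Sprod (f : ℕ → ℂ) (hf1 : f 1 = 1)
    (hf : ∀ a b : ℕ, Nat.Coprime a b → f (a * b) = f a * f b)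
    (m : ℕ) {ι : Type*} [DecidableEq ι] (q : ι → ℕ) (hq : ∀ i, 0 < q i) :
    ∀ (S : Finset ι), (∀ i ∈ S, ∀ j ∈ S, i ≠ j → Nat.Coprime (q i) (q j)) →
    ∑ k ∈ range (∏ i ∈ S, q i), f (Nat.gcd k (∏ i ∈ S, q i)) *
        Complex.exp (-(2 * Real.pi * Complex.I * (k:ℂ) * (m:ℂ) / ((∏ i ∈ S, q i : ℕ):ℂ))) =
    ∏ i ∈ S, ∑ k ∈ range (q i), f (Nat.gcd k (q i)) *
        Complex.exp (-(2 * Real.pi * Complex.I * (k:ℂ) * (m:ℂ) / ((q i : ℕ):ℂ))) := by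
  intro S
  induction S using Finset.cons_induction with
  | empty =>
    intro _
    simp [hf1, Nat.gcd_comm]
  | cons a S ha ih =>
    intro hco
    have hcop : Nat.Coprime (q a) (∏ i ∈ S, q i) := by
      refine Nat.Coprime.prod_right ?_
      intro i hi
      exact hco a (Finset.mem_cons_self a S) i (Finset.mem_cons_of_mem hi)
        (fun h => ha (h ▸ hi))
    rw [Finset.prod_cons, Finset.prod_cons,
      Smult f hf (q a) (∏ i ∈ S, q i) m (hq a) (Finset.prod_pos (fun i _ => hq i)) hcop,
      ih (fun i hi j hj hij => hco i (Finset.mem_cons_of_mem hi) j (Finset.mem_cons_of_mem hj) hij)]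

theorem dft_f_gcd_prime_factorization (f : ℕ → ℂ) (hf1 : f 1 = 1)
    (hf : ∀ a b : ℕ, Nat.Coprime a b → f (a * b) = f a * f b)
    (r : ℕ) (p s t : Fin r → ℕ) (u n m : ℕ)
    (hp : ∀ i, (p i).Prime) (hpinj : Function.Injective p)
    (hs : ∀ i, 1 ≤ s i)
    (hn : n = ∏ i, p i ^ s i)
    (hm : m = u * ∏ i, p i ^ t i)
    (hu : ∀ i, Nat.Coprime u (p i)) :
    ∑ k ∈ Finset.Icc 1 n, f (Nat.gcd k n) *
        Complex.exp (-(2 * Real.pi * Complex.I * k * m / n)) =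
      ∏ i, (f (p i ^ s i) +
        ((p i : ℂ) - 1) * ∑ b ∈ Finset.Icc 1 (min (t i) (s i)),
          (p i : ℂ) ^ (b - 1) * f (p i ^ (s i - b)) -
        f (p i ^ (s i - t i - 1)) * (p i : ℂ) ^ (t i) *
          (if s i ≤ t i then 0 else 1)) := by
  have hq : ∀ i, 0 < p i ^ s i := fun i => Nat.pow_pos (hp i).pos
  have hnpos : 0 < n := hn ▸ Finset.prod_pos (fun i _ => hq i)
  have hn0 : (n:ℂ) ≠ 0 := Nat.cast_ne_zero.mpr hnpos.ne'
  -- Step 1: shift from Icc 1 n to range n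
  have hshift : ∑ k ∈ Finset.Icc 1 n, f (Nat.gcd k n) *
        Complex.exp (-(2 * Real.pi * Complex.I * (k:ℂ) * (m:ℂ) / (n:ℂ))) =
      ∑ k ∈ range n, f (Nat.gcd k n) *
        Complex.exp (-(2 * Real.pi * Complex.I * (k:ℂ) * (m:ℂ) / (n:ℂ))) := by
    have h1 : Finset.Icc 1 n = Finset.Ico 1 (n+1) := by
      rw [Finset.Ico_add_one_right_eq_Icc]
    rw [h1, Finset.sum_Ico_succ_top hnpos]
    rw [Finset.range_eq_Ico, Finset.sum_eq_sum_Ico_succ_bot hnpos]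
    have hend : f (Nat.gcd n n) *
        Complex.exp (-(2 * Real.pi * Complex.I * (n:ℂ) * (m:ℂ) / (n:ℂ))) =
        f (Nat.gcd 0 n) *
        Complex.exp (-(2 * Real.pi * Complex.I * ((0:ℕ):ℂ) * (m:ℂ) / (n:ℂ))) := by
      rw [Nat.gcd_self, Nat.gcd_zero_left]
      congr 1
      rw [show -(2 * (Real.pi:ℂ) * Complex.I * (n:ℂ) * (m:ℂ) / (n:ℂ))
          = -(2 * (Real.pi:ℂ) * Complex.I * (m:ℂ)) * ((n:ℂ)/(n:ℂ)) by ring,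
        div_self hn0, mul_one, expNatOne m]
      norm_num
    rw [hend]
    ring
  rw [hshift, hn]
  rw [Sprod f hf1 hf m (fun i => p i ^ s i) hq Finset.univ ?_]
  · refine Finset.prod_congr rfl ?_
    intro i _
    have hdvd : ∀ b : ℕ, p i ^ b ∣ m ↔ b ≤ t i := by
      intro b
      have hc : Nat.Coprime (p i) (u * ∏ j ∈ Finset.univ.erase i, p j ^ t j) := by
        refine Nat.Coprime.mul_right ((hu i).symm) ?_
        refine Nat.Coprime.prod_right ?_
        intro j hj
        have hij : p i ≠ p j := fun h =>
          (Finset.mem_erase.mp hj).1 (hpinj h).symm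
        exact Nat.Coprime.pow_right _ ((Nat.coprime_primes (hp i) (hp j)).mpr hij)
      have hm' : m = p i ^ t i * (u * ∏ j ∈ Finset.univ.erase i, p j ^ t j) := by
        rw [hm, ← Finset.mul_prod_erase Finset.univ _ (Finset.mem_univ i)]
        ring
      constructor
      · intro h
        have hcb : Nat.Coprime (p i ^ b) (u * ∏ j ∈ Finset.univ.erase i, p j ^ t j) :=
          Nat.Coprime.pow_left _ hc
        have : p i ^ b ∣ p i ^ t i := by
          rw [hm'] at h
          exact (Nat.Coprime.dvd_of_dvd_mul_right hcb) h
        exact (pow_dvd_pow_iff (hp i).pos.ne'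
          (fun hun => (hp i).ne_one (Nat.isUnit_iff.mp hun))).mp this
      · intro h
        rw [hm']
        exact dvd_mul_of_dvd_left (pow_dvd_pow _ h) _
    have := Htel f hf1 (p i) (s i) m (t i) (hp i) hdvd (s i) le_rfl
    simp only [Nat.sub_self, pow_zero, one_mul] at this
    rw [this]
    exact Galg f (p i) (s i) (t i) (hp i).one_lt.le (hs i)
  · intro i _ j _ hij
    exact Nat.Coprime.pow _ _ ((Nat.coprime_primes (hp i) (hp j)).mpr (fun h => hij (hpinj h)))
end

section
/- For a prime p, s ≥ 1, t ≥ 0, and a multiplicative function f, Σ_{k=1}^{p^s} f(gcd(k,p^s))·e^{-2πik·u·p^t/p^s} = f(p^s) + (p−1)·Σ_{b=1}^{min(t,s)} p^{b-1}·f(p^{s-b}) − f(p^{s-t-1})·p^t·(1 − [t ≥ s]), where gcd(u,p) = 1. -/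
open Finset

private lemma sum_Icc1 {M : Type*} [AddCommMonoid M] (g : ℕ → M) (n : ℕ) :
    ∑ b ∈ Finset.Icc 1 n, g b = ∑ i ∈ Finset.range n, g (1 + i) := by
  rw [← Finset.Ico_add_one_right_eq_Icc, Finset.sum_Ico_eq_sum_range]
  simp

private lemma exp_neg_nat_two_pi (m : ℕ) :
    Complex.exp (-((m : ℂ) * (2 * Real.pi * Complex.I))) = 1 := by
  have := Complex.exp_int_mul_two_pi_mul_I (-(m : ℤ))
  push_cast at this
  rw [← this]
  ring_nf

private lemma gcd_decomp (f : ℕ → ℂ) (hf1 : f 1 = 1) (p s : ℕ) (hp : p.Prime) (k : ℕ) :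
    f (Nat.gcd k (p ^ s)) =
      1 + ∑ b ∈ Finset.Icc 1 s, (if p ^ b ∣ k then f (p ^ b) - f (p ^ (b - 1)) else 0) := by
  obtain ⟨e, he, hge⟩ := (Nat.dvd_prime_pow hp).mp (Nat.gcd_dvd_right k (p ^ s))
  rw [hge]
  have hcond : ∀ b ∈ Finset.Icc 1 s, (p ^ b ∣ k ↔ b ≤ e) := by
    intro b hb
    simp only [Finset.mem_Icc] at hb
    constructor
    · intro hdk
      have : p ^ b ∣ Nat.gcd k (p ^ s) :=
        Nat.dvd_gcd hdk (pow_dvd_pow p hb.2)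
      rw [hge] at this
      exact (Nat.pow_dvd_pow_iff_le_right hp.one_lt).mp this
    · intro hbe
      exact dvd_trans (pow_dvd_pow p hbe) (hge ▸ Nat.gcd_dvd_left k (p ^ s))
  have tele : ∑ i ∈ Finset.range e, (f (p ^ (i + 1)) - f (p ^ i)) = f (p ^ e) - f (p ^ 0) :=
    Finset.sum_range_sub (fun j => f (p ^ j)) e
  calc f (p ^ e) = 1 + ∑ b ∈ Finset.Icc 1 s, (if b ≤ e then f (p ^ b) - f (p ^ (b - 1)) else 0) := by
        have h1 : ∑ b ∈ Finset.Icc 1 s, (if b ≤ e then f (p ^ b) - f (p ^ (b - 1)) else 0)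
            = ∑ b ∈ Finset.Icc 1 e, (f (p ^ b) - f (p ^ (b - 1))) := by
          rw [← Finset.sum_filter]
          congr 1
          ext b
          simp only [Finset.mem_filter, Finset.mem_Icc]
          omega
        have h2 : ∑ i ∈ Finset.range e, (f (p ^ (1 + i)) - f (p ^ (1 + i - 1)))
            = ∑ i ∈ Finset.range e, (f (p ^ (i + 1)) - f (p ^ i)) := by
          apply Finset.sum_congr rfl
          intro i _
          rw [show 1 + i = i + 1 from by omega]
          norm_num
        rw [h1, sum_Icc1, h2, tele]
        simp [hf1]
    _ = _ := by
        congr 1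
        apply Finset.sum_congr rfl
        intro b hb
        exact if_congr (hcond b hb).symm rfl rfl

private lemma exp_sum_eval (p s t u : ℕ) (hp : p.Prime) (hu : Nat.Coprime u p)
    (b : ℕ) (hb : b ≤ s) :
    ∑ k ∈ Finset.Icc 1 (p ^ s), (if p ^ b ∣ k then
        Complex.exp (-(2 * Real.pi * Complex.I * k * (u * p ^ t) / (p ^ s))) else 0)
      = if s ≤ t + b then ((p : ℂ)) ^ (s - b) else 0 := by
  have hp0 : (0:ℕ) < p := hp.pos
  have hpc : ((p : ℂ)) ≠ 0 := by exact_mod_cast hp0.ne'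
  have hcb : ((p : ℂ)) ^ b ≠ 0 := pow_ne_zero _ hpc
  have hcsb : ((p : ℂ)) ^ (s - b) ≠ 0 := pow_ne_zero _ hpc
  have hps : ((p : ℂ)) ^ s = (p : ℂ) ^ b * (p : ℂ) ^ (s - b) := by
    rw [← pow_add]; congr 1; omega
  set z : ℂ := Complex.exp (-(2 * Real.pi * Complex.I * (u * p ^ t) / (p ^ (s - b)))) with hz
  have hstep1 : ∑ k ∈ Finset.Icc 1 (p ^ s), (if p ^ b ∣ k then
        Complex.exp (-(2 * Real.pi * Complex.I * k * (u * p ^ t) / (p ^ s))) else 0)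
      = ∑ j ∈ Finset.Icc 1 (p ^ (s - b)), z ^ j := by
    rw [← Finset.sum_filter]
    symm
    apply Finset.sum_nbij' (fun j => p ^ b * j) (fun k => k / p ^ b)
    · intro j hj
      simp only [Finset.mem_Icc] at hj
      simp only [Finset.mem_filter, Finset.mem_Icc]
      refine ⟨⟨?_, ?_⟩, Dvd.intro j rfl⟩
      · exact Nat.mul_pos (pow_pos hp0 b) hj.1
      · calc p ^ b * j ≤ p ^ b * p ^ (s - b) := Nat.mul_le_mul_left _ hj.2
          _ = p ^ s := by rw [← pow_add]; congr 1; omega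
    · intro k hk
      simp only [Finset.mem_filter, Finset.mem_Icc] at hk
      obtain ⟨⟨hk1, hk2⟩, m, hm⟩ := hk
      subst hm
      rw [Nat.mul_div_cancel_left _ (pow_pos hp0 b)]
      simp only [Finset.mem_Icc]
      constructor
      · have hm0 : m ≠ 0 := by rintro rfl; simp at hk1
        omega
      · by_contra h
        push_neg at h
        have : p ^ s < p ^ b * m := by
          calc p ^ s = p ^ b * p ^ (s - b) := by rw [← pow_add]; congr 1; omega
            _ < p ^ b * m := by
              exact mul_lt_mul_of_pos_left h (pow_pos hp0 b)
        omega
    · intro j hj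
      exact Nat.mul_div_cancel_left _ (pow_pos hp0 b)
    · intro k hk
      simp only [Finset.mem_filter] at hk
      exact Nat.mul_div_cancel' hk.2
    · intro j hj
      rw [hz, ← Complex.exp_nat_mul]
      congr 1
      push_cast
      field_simp
      rw [hps]
      ring
  rw [hstep1]
  have hN : ∑ j ∈ Finset.Icc 1 (p ^ (s - b)), z ^ j
      = z * ∑ i ∈ Finset.range (p ^ (s - b)), z ^ i := by
    rw [sum_Icc1, Finset.mul_sum]
    apply Finset.sum_congr rfl
    intro i _
    rw [pow_add, pow_one]
  by_cases hc : s ≤ t + b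
  · -- z = 1
    have hz1 : z = 1 := by
      have ht : ((p : ℂ)) ^ t = (p : ℂ) ^ (s - b) * (p : ℂ) ^ (t - (s - b)) := by
        rw [← pow_add]; congr 1; omega
      rw [hz]
      have harg : -(2 * (Real.pi:ℂ) * Complex.I * (u * p ^ t) / (p ^ (s - b)))
          = -(((u * p ^ (t - (s - b)) : ℕ) : ℂ) * (2 * Real.pi * Complex.I)) := by
        push_cast
        rw [ht]
        field_simp
      rw [harg, exp_neg_nat_two_pi]
    rw [hN, hz1]
    simp only [one_pow, one_mul, Finset.sum_const, Finset.card_range, nsmul_eq_mul, mul_one]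
    rw [if_pos hc]
    push_cast
    ring
  · -- z ≠ 1
    have hzN : z ^ (p ^ (s - b)) = 1 := by
      rw [hz, ← Complex.exp_nat_mul]
      have harg : ((p ^ (s - b) : ℕ) : ℂ) * -(2 * (Real.pi:ℂ) * Complex.I * (u * p ^ t) / (p ^ (s - b)))
          = -(((u * p ^ t : ℕ) : ℂ) * (2 * Real.pi * Complex.I)) := by
        push_cast
        field_simp
      rw [harg, exp_neg_nat_two_pi]
    have hzne : z ≠ 1 := by
      intro h
      rw [hz, Complex.exp_eq_one_iff] at h
      obtain ⟨n, hn⟩ := h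
      have hpi : (2 * (Real.pi:ℂ) * Complex.I) ≠ 0 := by
        simp [Real.pi_ne_zero, Complex.I_ne_zero]
      rw [neg_eq_iff_eq_neg, div_eq_iff hcsb] at hn
      have h2 : (u : ℂ) * (p : ℂ) ^ t = ((-n : ℤ) : ℂ) * (p : ℂ) ^ (s - b) := by
        apply mul_left_cancel₀ hpi
        push_cast
        linear_combination hn
      have keyZ : (u : ℤ) * (p : ℤ) ^ t = -n * (p : ℤ) ^ (s - b) := by
        exact_mod_cast h2
      have hdvd : (p : ℤ) ^ (s - b) ∣ (u : ℤ) * (p : ℤ) ^ t := ⟨-n, by linarith [keyZ]⟩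
      have hdvdN : p ^ (s - b) ∣ u * p ^ t := by
        have h3 : ((p ^ (s - b) : ℕ) : ℤ) ∣ ((u * p ^ t : ℕ) : ℤ) := by push_cast; exact hdvd
        exact_mod_cast h3
      have h1 : p ^ (t + 1) ∣ u * p ^ t :=
        dvd_trans (pow_dvd_pow p (by omega)) hdvdN
      have h2 : p ∣ u := by
        have : p ^ t * p ∣ u * p ^ t := by rwa [pow_succ] at h1
        rw [mul_comm u (p ^ t)] at this
        exact (Nat.mul_dvd_mul_iff_left (pow_pos hp.pos t)).mp this
      have := Nat.Coprime.eq_one_of_dvd hu.symm h2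
      exact hp.one_lt.ne' this
    rw [hN, if_neg hc, geom_sum_eq hzne, hzN]
    simp

theorem dft_f_gcd_prime_power (f : ℕ → ℂ) (hf1 : f 1 = 1)
    (hf : ∀ a b : ℕ, Nat.Coprime a b → f (a * b) = f a * f b)
    (p s t u : ℕ) (hp : p.Prime) (hs : 1 ≤ s) (hu : Nat.Coprime u p) :
    ∑ k ∈ Finset.Icc 1 (p ^ s), f (Nat.gcd k (p ^ s)) *
        Complex.exp (-(2 * Real.pi * Complex.I * k * (u * p ^ t) / (p ^ s))) =
      f (p ^ s) +
        ((p : ℂ) - 1) * ∑ b ∈ Finset.Icc 1 (min t s),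
          (p : ℂ) ^ (b - 1) * f (p ^ (s - b)) -
        f (p ^ (s - t - 1)) * (p : ℂ) ^ t * (if s ≤ t then 0 else 1) := by
  set E : ℕ → ℂ := fun k =>
    Complex.exp (-(2 * Real.pi * Complex.I * k * (u * p ^ t) / (p ^ s))) with hE
  have step1 : ∑ k ∈ Finset.Icc 1 (p ^ s), f (Nat.gcd k (p ^ s)) * E k
      = (∑ k ∈ Finset.Icc 1 (p ^ s), E k) +
        ∑ b ∈ Finset.Icc 1 s, ((f (p ^ b) - f (p ^ (b - 1))) *
          ∑ k ∈ Finset.Icc 1 (p ^ s), (if p ^ b ∣ k then E k else 0)) := by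
    have : ∀ k ∈ Finset.Icc 1 (p ^ s), f (Nat.gcd k (p ^ s)) * E k
        = E k + ∑ b ∈ Finset.Icc 1 s, (if p ^ b ∣ k then (f (p ^ b) - f (p ^ (b - 1))) * E k else 0) := by
      intro k _
      rw [gcd_decomp f hf1 p s hp k, add_mul, one_mul, Finset.sum_mul]
      congr 1
      apply Finset.sum_congr rfl
      intro b _
      rw [ite_mul, zero_mul]
    rw [Finset.sum_congr rfl this, Finset.sum_add_distrib, Finset.sum_comm]
    congr 1
    apply Finset.sum_congr rfl
    intro b _
    rw [Finset.mul_sum]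
    apply Finset.sum_congr rfl
    intro k _
    rw [mul_ite, mul_zero]
  have e0 : ∑ k ∈ Finset.Icc 1 (p ^ s), E k
      = if s ≤ t then ((p : ℂ)) ^ s else 0 := by
    have := exp_sum_eval p s t u hp hu 0 (Nat.zero_le s)
    simpa using this
  have eb : ∀ b ∈ Finset.Icc 1 s,
      (f (p ^ b) - f (p ^ (b - 1))) * ∑ k ∈ Finset.Icc 1 (p ^ s), (if p ^ b ∣ k then E k else 0)
      = (f (p ^ b) - f (p ^ (b - 1))) * (if s ≤ t + b then ((p : ℂ)) ^ (s - b) else 0) := by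
    intro b hb
    simp only [Finset.mem_Icc] at hb
    rw [exp_sum_eval p s t u hp hu b hb.2]
  rw [step1, e0, Finset.sum_congr rfl eb]
  -- now pure algebra
  clear step1 e0 eb hE E hf
  -- reindex the middle sum over range s with reflection
  have hmid : ∑ b ∈ Finset.Icc 1 s, ((f (p ^ b) - f (p ^ (b - 1))) *
        (if s ≤ t + b then ((p : ℂ)) ^ (s - b) else 0))
      = ∑ i ∈ Finset.range s, (if i ≤ t then
          (f (p ^ (s - i)) - f (p ^ (s - (i + 1)))) * (p : ℂ) ^ i else 0) := by
    rw [sum_Icc1]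
    rw [← Finset.sum_range_reflect]
    apply Finset.sum_congr rfl
    intro i hi
    simp only [Finset.mem_range] at hi
    have h1 : 1 + (s - 1 - i) = s - i := by omega
    rw [h1]
    have h2 : s - (s - i) = i := by omega
    have h3 : s - i - 1 = s - (i + 1) := by omega
    have h4 : (s ≤ t + (s - i)) ↔ (i ≤ t) := by omega
    rw [h2, h3]
    by_cases hc : i ≤ t
    · rw [if_pos (h4.mpr hc), if_pos hc]
    · rw [if_neg (fun h => hc (h4.mp h)), if_neg hc, mul_zero]
  rw [hmid]
  have hfilter : ∑ i ∈ Finset.range s, (if i ≤ t then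
        (f (p ^ (s - i)) - f (p ^ (s - (i + 1)))) * (p : ℂ) ^ i else 0)
      = ∑ i ∈ Finset.range (min s (t + 1)),
        (f (p ^ (s - i)) - f (p ^ (s - (i + 1)))) * (p : ℂ) ^ i := by
    have : ∀ i, (i ≤ t) ↔ i ∈ Finset.range (t + 1) := by
      intro i; simp [Nat.lt_succ_iff]
    simp_rw [this]
    rw [Finset.sum_ite_mem]
    congr 1
    ext x
    simp [lt_min_iff]
  rw [hfilter]
  -- RHS sum as range sum
  rw [sum_Icc1]
  by_cases hts : s ≤ t
  · -- min t s = s, min s (t+1) = s, indicator term = 0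
    simp only [if_pos hts]
    have hm1 : min t s = s := by omega
    have hm2 : min s (t + 1) = s := by omega
    rw [hm1, hm2]
    simp only [mul_zero]
    rw [sub_zero]
    -- identity: p^s appears from if_pos
    have expand : ∑ i ∈ Finset.range s, (f (p ^ (s - i)) - f (p ^ (s - (i + 1)))) * (p : ℂ) ^ i
        = (∑ i ∈ Finset.range s, f (p ^ (s - i)) * (p : ℂ) ^ i)
          - ∑ i ∈ Finset.range s, f (p ^ (s - (i + 1))) * (p : ℂ) ^ i := by
      rw [← Finset.sum_sub_distrib]
      apply Finset.sum_congr rfl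
      intro i _
      ring
    rw [expand]
    have key1 : (p : ℂ) ^ s + ∑ i ∈ Finset.range s, f (p ^ (s - i)) * (p : ℂ) ^ i
        = ∑ i ∈ Finset.range (s + 1), f (p ^ (s - i)) * (p : ℂ) ^ i := by
      rw [Finset.sum_range_succ]
      have : s - s = 0 := by omega
      rw [this, pow_zero, hf1, one_mul]
      ring
    have key2 : ∑ i ∈ Finset.range (s + 1), f (p ^ (s - i)) * (p : ℂ) ^ i
        = (∑ i ∈ Finset.range s, f (p ^ (s - (i + 1))) * (p : ℂ) ^ (i + 1)) + f (p ^ s) := by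
      rw [Finset.sum_range_succ']
      congr 1
      simp
    have key3 : ((p : ℂ) - 1) * ∑ i ∈ Finset.range s, (p : ℂ) ^ (1 + i - 1) * f (p ^ (s - (1 + i)))
        = (∑ i ∈ Finset.range s, f (p ^ (s - (i + 1))) * (p : ℂ) ^ (i + 1))
          - ∑ i ∈ Finset.range s, f (p ^ (s - (i + 1))) * (p : ℂ) ^ i := by
      rw [← Finset.sum_sub_distrib, Finset.mul_sum]
      apply Finset.sum_congr rfl
      intro i _
      have h1 : 1 + i - 1 = i := by omega
      have h2 : 1 + i = i + 1 := by omega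
      rw [h1, h2, pow_succ]
      ring
    rw [key3]
    linear_combination key1 + key2
  · -- t < s
    simp only [if_neg hts, mul_one]
    have hm1 : min t s = t := by omega
    have hm2 : min s (t + 1) = t + 1 := by omega
    rw [hm1, hm2]
    have expand : ∑ i ∈ Finset.range (t + 1), (f (p ^ (s - i)) - f (p ^ (s - (i + 1)))) * (p : ℂ) ^ i
        = (∑ i ∈ Finset.range (t + 1), f (p ^ (s - i)) * (p : ℂ) ^ i)
          - ∑ i ∈ Finset.range (t + 1), f (p ^ (s - (i + 1))) * (p : ℂ) ^ i := by
      rw [← Finset.sum_sub_distrib]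
      apply Finset.sum_congr rfl
      intro i _
      ring
    rw [expand]
    have key1 : ∑ i ∈ Finset.range (t + 1), f (p ^ (s - i)) * (p : ℂ) ^ i
        = (∑ i ∈ Finset.range t, f (p ^ (s - (i + 1))) * (p : ℂ) ^ (i + 1)) + f (p ^ s) := by
      rw [Finset.sum_range_succ']
      congr 1
      simp
    have key2 : ∑ i ∈ Finset.range (t + 1), f (p ^ (s - (i + 1))) * (p : ℂ) ^ i
        = (∑ i ∈ Finset.range t, f (p ^ (s - (i + 1))) * (p : ℂ) ^ i)
          + f (p ^ (s - (t + 1))) * (p : ℂ) ^ t := by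
      rw [Finset.sum_range_succ]
    have key3 : ((p : ℂ) - 1) * ∑ i ∈ Finset.range t, (p : ℂ) ^ (1 + i - 1) * f (p ^ (s - (1 + i)))
        = (∑ i ∈ Finset.range t, f (p ^ (s - (i + 1))) * (p : ℂ) ^ (i + 1))
          - ∑ i ∈ Finset.range t, f (p ^ (s - (i + 1))) * (p : ℂ) ^ i := by
      rw [← Finset.sum_sub_distrib, Finset.mul_sum]
      apply Finset.sum_congr rfl
      intro i _
      have h1 : 1 + i - 1 = i := by omega
      have h2 : 1 + i = i + 1 := by omega
      rw [h1, h2, pow_succ]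
      ring
    have hst : s - t - 1 = s - (t + 1) := by omega
    rw [key3, hst, zero_add]
    linear_combination key1 - key2
end

section
/- If f is the summatory function of an arithmetic function t, i.e., f(n) = Σ_{d|n} t(d), and gcd(m,n) = 1, then Σ_{k=1}^n f(gcd(k,n))·e^{-2πikm/n} = t(n). -/
open Finset

lemma root_sum (c m : ℕ) (hc : 0 < c) (h : Nat.gcd m c = 1) :
    ∑ j ∈ Icc 1 c, Complex.exp (-(2 * Real.pi * Complex.I * j * m / c))
      = if c = 1 then 1 else 0 := by
  set ζ : ℂ := Complex.exp (-(2 * Real.pi * Complex.I * m / c)) with hζ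
  have hc0 : (c : ℂ) ≠ 0 := Nat.cast_ne_zero.mpr hc.ne'
  have hterm : ∀ j : ℕ, Complex.exp (-(2 * Real.pi * Complex.I * j * m / c)) = ζ ^ j := by
    intro j
    rw [hζ, ← Complex.exp_nat_mul]
    ring_nf
  have hζc : ζ ^ c = 1 := by
    rw [hζ, ← Complex.exp_nat_mul, Complex.exp_eq_one_iff]
    exact ⟨-(m : ℤ), by push_cast; field_simp⟩
  by_cases h1 : c = 1
  · subst h1
    rw [if_pos rfl, show Icc 1 1 = {1} from rfl, Finset.sum_singleton, hterm, pow_one,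
      ← pow_one ζ, hζc]
  · rw [if_neg h1]
    have hζne : ζ ≠ 1 := by
      intro he
      rw [hζ, Complex.exp_eq_one_iff] at he
      obtain ⟨k, hk⟩ := he
      have h2πI : (2 * Real.pi * Complex.I : ℂ) ≠ 0 := by
        simp [Real.pi_ne_zero, Complex.I_ne_zero]
      have h2 : (-(m : ℂ) / c) * (2 * Real.pi * Complex.I)
          = (k : ℂ) * (2 * Real.pi * Complex.I) := by rw [← hk]; ring
      have h3 := mul_right_cancel₀ h2πI h2
      have h4 : (m : ℂ) = ((-k : ℤ) : ℂ) * c := by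
        push_cast
        field_simp at h3
        linear_combination -h3
      have h5 : (m : ℤ) = -k * c := by exact_mod_cast h4
      have h6 : c ∣ m := by
        have : (c : ℤ) ∣ (m : ℤ) := ⟨-k, by linarith [h5]⟩
        exact_mod_cast this
      exact h1 (Nat.dvd_one.mp (h ▸ Nat.dvd_gcd h6 dvd_rfl))
    rw [Finset.sum_congr rfl (fun j _ => hterm j)]
    have hshift : ∑ j ∈ Icc 1 c, ζ ^ j = ζ * ∑ i ∈ range c, ζ ^ i := by
      rw [show Icc 1 c = Ico 1 (c+1) by rw [Finset.Ico_add_one_right_eq_Icc], Finset.sum_Ico_eq_sum_range, Finset.mul_sum]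
      simp only [Nat.add_sub_cancel]
      simp [pow_add, pow_one]
    rw [hshift, geom_sum_eq hζne, hζc]
    simp

set_option maxHeartbeats 1000000 in
theorem dft_summatory_gcd_eq (g f : ℕ → ℂ)
    (hfg : ∀ n : ℕ, 0 < n → f n = ∑ d ∈ n.divisors, g d)
    (n m : ℕ) (hn : 1 ≤ n) (hm : Nat.gcd m n = 1) :
    ∑ k ∈ Finset.Icc 1 n, f (Nat.gcd k n) *
        Complex.exp (-(2 * Real.pi * Complex.I * k * m / n)) = g n := by
  set E : ℕ → ℂ := fun k => Complex.exp (-(2 * Real.pi * Complex.I * k * m / n)) with hE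
  calc ∑ k ∈ Icc 1 n, f (Nat.gcd k n) * E k
      = ∑ k ∈ Icc 1 n, ∑ d ∈ n.divisors, (if d ∣ k then g d else 0) * E k := by
        refine sum_congr rfl fun k hk => ?_
        have hgcdpos : 0 < Nat.gcd k n := Nat.gcd_pos_of_pos_right _ hn
        rw [hfg _ hgcdpos]
        have hds : (Nat.gcd k n).divisors = n.divisors.filter (· ∣ k) := by
          ext d
          simp only [Nat.mem_divisors, Finset.mem_filter, Nat.dvd_gcd_iff]
          have h1 : n ≠ 0 := by omega
          have h2 : Nat.gcd k n ≠ 0 := hgcdpos.ne'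
          tauto
        rw [hds, Finset.sum_filter, Finset.sum_mul]
    _ = ∑ d ∈ n.divisors, ∑ k ∈ Icc 1 n, (if d ∣ k then g d else 0) * E k := sum_comm
    _ = ∑ d ∈ n.divisors, g d * ∑ k ∈ Icc 1 n, (if d ∣ k then E k else 0) := by
        refine sum_congr rfl fun d _ => ?_
        rw [Finset.mul_sum]
        refine sum_congr rfl fun k _ => ?_
        split <;> simp
    _ = ∑ d ∈ n.divisors, g d * (if n / d = 1 then 1 else 0) := by
        refine sum_congr rfl fun d hd => ?_
        obtain ⟨hdn, hn0⟩ := Nat.mem_divisors.mp hd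
        have hd0 : 0 < d := Nat.pos_of_mem_divisors hd
        set c := n / d with hc
        have hnc : n = d * c := by rw [hc, Nat.mul_div_cancel' hdn]
        have hcpos : 0 < c := Nat.div_pos (Nat.le_of_dvd hn hdn) hd0
        congr 1
        rw [← Finset.sum_filter]
        have himg : (Icc 1 n).filter (fun k => d ∣ k) = (Icc 1 c).image (fun j => d * j) := by
          ext k
          simp only [Finset.mem_filter, Finset.mem_Icc, Finset.mem_image]
          constructor
          · rintro ⟨⟨hk1, hkn⟩, j, rfl⟩
            exact ⟨j, ⟨Nat.one_le_iff_ne_zero.mpr (by rintro rfl; omega),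
              by rw [hnc] at hkn; exact Nat.le_of_mul_le_mul_left hkn hd0⟩, rfl⟩
          · rintro ⟨j, ⟨hj1, hjc⟩, rfl⟩
            exact ⟨⟨Nat.one_le_iff_ne_zero.mpr (by positivity),
              by rw [hnc]; exact Nat.mul_le_mul_left d hjc⟩, ⟨j, rfl⟩⟩
        rw [himg, Finset.sum_image (fun a _ b _ h => Nat.eq_of_mul_eq_mul_left hd0 h)]
        have hmc : Nat.gcd m c = 1 :=
          Nat.Coprime.coprime_dvd_right (hnc ▸ Dvd.intro_left d rfl) hm
        rw [← root_sum c m hcpos hmc]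
        refine sum_congr rfl fun j _ => ?_
        have hcC : (c : ℂ) ≠ 0 := Nat.cast_ne_zero.mpr hcpos.ne'
        have hdC : (d : ℂ) ≠ 0 := Nat.cast_ne_zero.mpr hd0.ne'
        have hcast : (n : ℂ) = d * c := by exact_mod_cast congrArg (Nat.cast : ℕ → ℂ) hnc
        have h1 : E (d * j) = Complex.exp (-(2 * (Real.pi:ℂ) * Complex.I * ((d*j:ℕ):ℂ) * m / n)) := by
          rw [hE]
        rw [h1]
        congr 1
        push_cast
        rw [hcast]
        field_simp
    _ = g n := by
        rw [Finset.sum_eq_single n]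
        · simp [Nat.div_self (Nat.lt_of_lt_of_le Nat.zero_lt_one hn)]
        · intro d hd hne
          obtain ⟨hdn, _⟩ := Nat.mem_divisors.mp hd
          have : n / d ≠ 1 := fun h => hne (by
            have := Nat.eq_mul_of_div_eq_right hdn h
            omega)
          simp [this]
        · intro h
          exact absurd (Nat.mem_divisors_self n (by omega)) h
end

section
/- For a multiplicative function f and n = ∏_{i=1}^r p_i^{s_i}, Σ_{k=1}^n f(gcd(k,n)) = ∏_{i=1}^r [ f(p_i^{s_i}) + (p_i − 1)·Σ_{b=1}^{s_i} p_i^{b−1}·f(p_i^{s_i − b}) ]. -/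
open Finset

open ArithmeticFunction in
/-- The totient as an arithmetic function. -/
noncomputable def totientAF : ArithmeticFunction ℕ := ⟨Nat.totient, Nat.totient_zero⟩

open ArithmeticFunction in
lemma totientAF_isMult : totientAF.IsMultiplicative :=
  ⟨Nat.totient_one, fun h => Nat.totient_mul h⟩

open ArithmeticFunction in
/-- The sum of f(gcd(k,n)) equals the Dirichlet convolution value. -/
lemma sum_gcd_eq_conv (f : ℕ → ℂ) (n : ℕ) (hn : 1 ≤ n) :
    ∑ k ∈ Finset.Icc 1 n, f (Nat.gcd k n) =
      ∑ d ∈ n.divisors, f d * (Nat.totient (n / d) : ℂ) := by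
  have h1 : ∑ k ∈ Finset.Icc 1 n, f (Nat.gcd k n) = ∑ k ∈ Finset.range n, f (n.gcd k) := by
    have hIcc : Finset.Icc 1 n = insert n (Finset.Ico 1 n) := by
      rw [Finset.Ico_insert_right hn]
    have hrange : Finset.range n = insert 0 (Finset.Ico 1 n) := by
      ext x
      simp only [Finset.mem_range, Finset.mem_insert, Finset.mem_Ico]
      omega
    rw [hIcc, hrange, Finset.sum_insert (by simp), Finset.sum_insert (by simp)]
    simp only [Nat.gcd_self, Nat.gcd_zero_right]
    congr 1
    refine Finset.sum_congr rfl fun k _ => by rw [Nat.gcd_comm]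
  rw [h1]
  have h2 : ∀ k ∈ Finset.range n, n.gcd k ∈ n.divisors := fun k _ =>
    Nat.mem_divisors.2 ⟨Nat.gcd_dvd_left _ _, by omega⟩
  rw [← Finset.sum_fiberwise_of_maps_to h2 (fun k => f (n.gcd k))]
  refine Finset.sum_congr rfl fun d hd => ?_
  have : ∑ k ∈ (Finset.range n).filter (fun k => n.gcd k = d), f (n.gcd k)
      = ∑ k ∈ (Finset.range n).filter (fun k => n.gcd k = d), f d := by
    refine Finset.sum_congr rfl fun k hk => ?_
    rw [(Finset.mem_filter.1 hk).2]
  rw [this, Finset.sum_const, nsmul_eq_mul, mul_comm]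
  congr 1
  rw [Nat.totient_div_of_dvd (Nat.dvd_of_mem_divisors hd)]

theorem sum_f_gcd_prime_factorization (f : ℕ → ℂ) (hf1 : f 1 = 1)
    (hf : ∀ a b : ℕ, Nat.Coprime a b → f (a * b) = f a * f b)
    (r : ℕ) (p s : Fin r → ℕ) (n : ℕ)
    (hp : ∀ i, (p i).Prime) (hpinj : Function.Injective p)
    (hs : ∀ i, 1 ≤ s i) (hn : n = ∏ i, p i ^ s i) :
    ∑ k ∈ Finset.Icc 1 n, f (Nat.gcd k n) =
      ∏ i, (f (p i ^ s i) +
        ((p i : ℂ) - 1) * ∑ b ∈ Finset.Icc 1 (s i),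
          (p i : ℂ) ^ (b - 1) * f (p i ^ (s i - b))) := by
  classical
  -- package f as an arithmetic function
  set F : ArithmeticFunction ℂ :=
    ⟨fun m => if m = 0 then 0 else f m, by simp⟩ with hF
  have hFapp : ∀ m, m ≠ 0 → F m = f m := fun m hm => by simp [hF, hm]
  have hFmult : F.IsMultiplicative := by
    constructor
    · simpa [hF] using hf1
    · intro m k hcop
      rcases eq_or_ne m 0 with rfl | hm
      · have : k = 1 := by simpa [Nat.Coprime] using hcop
        subst this
        simp [hF]
      rcases eq_or_ne k 0 with rfl | hk
      · have : m = 1 := by simpa [Nat.Coprime] using hcop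
        subst this
        simp [hF]
      rw [hFapp _ (Nat.mul_ne_zero hm hk), hFapp _ hm, hFapp _ hk]
      exact hf m k hcop
  set G : ArithmeticFunction ℂ := F * (totientAF : ArithmeticFunction ℂ) with hG
  have hGmult : G.IsMultiplicative := hFmult.mul (totientAF_isMult.natCast)
  -- G evaluated: G m = ∑ d ∈ m.divisors, f d * φ(m/d)  (for m ≠ 0)
  have hGapp : ∀ m : ℕ, m ≠ 0 →
      G m = ∑ d ∈ m.divisors, f d * (Nat.totient (m / d) : ℂ) := by
    intro m hm
    rw [hG, ArithmeticFunction.mul_apply,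
      Nat.sum_divisorsAntidiagonal (fun x y => F x * (totientAF : ArithmeticFunction ℂ) y)]
    refine Finset.sum_congr rfl fun d hd => ?_
    rw [hFapp d (Nat.pos_of_mem_divisors hd).ne']
    congr 1
  have hn0 : n ≠ 0 := by
    rw [hn]
    exact Finset.prod_ne_zero_iff.2 fun i _ => pow_ne_zero _ (hp i).pos.ne'
  -- main conversion
  rw [sum_gcd_eq_conv f n (by omega), ← hGapp n hn0, hn]
  rw [hGmult.map_prod (fun i => p i ^ s i) Finset.univ
    (fun i _ j _ hij => Nat.Coprime.pow _ _
      ((Nat.coprime_primes (hp i) (hp j)).2 fun h => hij (hpinj h)))]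
  refine Finset.prod_congr rfl fun i _ => ?_
  -- compute G (p^s) for p prime, 1 ≤ s
  set q := p i with hq
  set t := s i with ht
  have hqp : q.Prime := hp i
  have hts : 1 ≤ t := hs i
  rw [hGapp _ (pow_ne_zero t hqp.pos.ne'),
    Nat.sum_divisors_prime_pow hqp (f := fun d => f d * (Nat.totient ((q ^ t) / d) : ℂ))]
  have hdiv : ∀ j ∈ Finset.range (t + 1), q ^ t / q ^ j = q ^ (t - j) := fun j hj =>
    Nat.pow_div (by simpa using Nat.lt_succ_iff.1 (Finset.mem_range.1 hj)) hqp.pos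
  rw [Finset.sum_congr rfl fun j hj => by rw [hdiv j hj]]
  rw [Finset.sum_range_succ]
  simp only [Nat.sub_self, pow_zero, Nat.totient_one, Nat.cast_one, mul_one]
  rw [add_comm]
  congr 1
  -- remaining: ∑ j ∈ range t, f(q^j) * φ(q^(t-j)) = (q-1) * ∑ b ∈ Icc 1 t, q^(b-1) f(q^(t-b))
  rw [Finset.mul_sum]
  have hre : ∑ b ∈ Finset.Icc 1 t, ((q:ℂ) - 1) * ((q:ℂ) ^ (b - 1) * f (q ^ (t - b)))
      = ∑ j ∈ Finset.range t, ((q:ℂ) - 1) * ((q:ℂ) ^ j * f (q ^ (t - (j + 1)))) := by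
    rw [show Finset.Icc 1 t = Finset.map ⟨fun j => j + 1, add_left_injective 1⟩
        (Finset.range t) from ?_]
    · rw [Finset.sum_map]
      simp
    · ext x
      simp only [Finset.mem_Icc, Finset.mem_map, Finset.mem_range,
        Function.Embedding.coeFn_mk]
      constructor
      · rintro ⟨h1, h2⟩; exact ⟨x - 1, by omega, by omega⟩
      · rintro ⟨a, ha, rfl⟩; omega
  rw [hre, ← Finset.sum_range_reflect]
  refine Finset.sum_congr rfl fun j hj => ?_
  have hjt : j < t := Finset.mem_range.1 hj
  have h1 : t - (t - 1 - j) = j + 1 := by omega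
  have h2 : t - 1 - j = t - (j + 1) := by omega
  rw [h1, h2, Nat.totient_prime_pow hqp (by omega : 0 < j + 1)]
  have hcast : ((q ^ (j + 1 - 1) * (q - 1) : ℕ) : ℂ) = (q:ℂ) ^ j * ((q:ℂ) - 1) := by
    push_cast [Nat.cast_sub hqp.one_lt.le]
    ring
  rw [hcast]
  ring
end

section
/- For distinct primes p and q and n = pq, the DFT h_m(n) = Σ_{k=1}^n gcd(k,n)·e^{-2πikm/n} takes only the four values: φ(n) if gcd(m,n)=1; (2p−1)(q−1) if gcd(m,n)=p; (p−1)(2q−1) if gcd(m,n)=q; and (2p−1)(2q−1) if gcd(m,n)=pq. -/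
open Finset

lemma geom_root_sum (N m : ℕ) (hN : 0 < N) :
    ∑ j ∈ Finset.range N, Complex.exp (-(2 * Real.pi * Complex.I * j * m / N)) =
      if N ∣ m then (N : ℂ) else 0 := by
  have hN0 : (N : ℂ) ≠ 0 := Nat.cast_ne_zero.mpr hN.ne'
  have hpi : (2 * (Real.pi:ℂ) * Complex.I) ≠ 0 := by
    simp [Real.pi_ne_zero, Complex.I_ne_zero]
  have hterm : ∀ j : ℕ, Complex.exp (-(2 * Real.pi * Complex.I * j * m / N)) =
      Complex.exp (-(2 * Real.pi * Complex.I * m / N)) ^ j := by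
    intro j
    rw [← Complex.exp_nat_mul]
    ring_nf
  simp only [hterm]
  by_cases h : N ∣ m
  · obtain ⟨c, rfl⟩ := h
    have h1 : Complex.exp (-(2 * Real.pi * Complex.I * (N * c : ℕ) / N)) = 1 := by
      have : -(2 * (Real.pi:ℂ) * Complex.I * (N * c : ℕ) / N) = ((-c : ℤ) : ℂ) * (2 * Real.pi * Complex.I) := by
        push_cast
        field_simp
      rw [this, Complex.exp_int_mul_two_pi_mul_I]
    rw [if_pos ⟨c, rfl⟩, h1]
    simp
  · rw [if_neg h]
    have hz : Complex.exp (-(2 * Real.pi * Complex.I * m / N)) ≠ 1 := by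
      intro hcon
      rw [Complex.exp_eq_one_iff] at hcon
      obtain ⟨k, hk⟩ := hcon
      apply h
      have hk' : -(2 * (Real.pi:ℂ) * Complex.I * m) = k * (2 * Real.pi * Complex.I) * N := by
        field_simp at hk
        linear_combination (2 * (Real.pi:ℂ) * Complex.I) * hk
      have h2 : (2 * (Real.pi:ℂ) * Complex.I) * ((m:ℂ) + k * N) = 0 := by
        linear_combination -hk'
      have h5 : (m:ℂ) + k * N = 0 := (mul_eq_zero.mp h2).resolve_left hpi
      have h4 : (m:ℤ) = -k * N := by
        have : (m:ℂ) = ((-k * N : ℤ):ℂ) := by push_cast; linear_combination h5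
        exact_mod_cast this
      exact Int.natCast_dvd_natCast.mp ⟨-k, by rw [h4]; ring⟩
    rw [geom_sum_eq hz]
    have hNpow : Complex.exp (-(2 * Real.pi * Complex.I * m / N)) ^ N = 1 := by
      rw [← Complex.exp_nat_mul]
      have : (N:ℂ) * (-(2 * Real.pi * Complex.I * m / N)) = ((-m : ℤ):ℂ) * (2 * Real.pi * Complex.I) := by
        push_cast; field_simp
      rw [this, Complex.exp_int_mul_two_pi_mul_I]
    rw [hNpow]
    simp

lemma mult_sum (n d m : ℕ) (hn : 0 < n) (hd : d ∣ n) (hd0 : 0 < d) :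
    ∑ k ∈ Finset.range n, (if d ∣ k then Complex.exp (-(2 * Real.pi * Complex.I * k * m / n)) else 0)
      = if (n / d) ∣ m then ((n / d : ℕ) : ℂ) else 0 := by
  have hnd : 0 < n / d := Nat.div_pos (Nat.le_of_dvd hn hd) hd0
  have hcast : (d:ℂ) * ((n/d : ℕ):ℂ) = (n:ℂ) := by exact_mod_cast Nat.mul_div_cancel' hd
  have hd0' : (d:ℂ) ≠ 0 := Nat.cast_ne_zero.mpr hd0.ne'
  have hnd0' : ((n/d : ℕ):ℂ) ≠ 0 := Nat.cast_ne_zero.mpr hnd.ne'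
  rw [← geom_root_sum (n/d) m hnd, ← Finset.sum_filter]
  refine Finset.sum_nbij' (i := fun k => k / d) (j := fun j => d * j) ?_ ?_ ?_ ?_ ?_
  · intro a ha
    simp only [Finset.mem_filter, Finset.mem_range] at ha ⊢
    exact Nat.div_lt_div_of_lt_of_dvd hd ha.1
  · intro a ha
    simp only [Finset.mem_filter, Finset.mem_range] at ha ⊢
    exact ⟨(Nat.lt_div_iff_mul_lt' hd a).mp ha, Dvd.intro a rfl⟩
  · intro a ha
    simp only [Finset.mem_filter, Finset.mem_range] at ha
    exact Nat.mul_div_cancel' ha.2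
  · intro a _
    exact Nat.mul_div_cancel_left a hd0
  · intro a ha
    simp only [Finset.mem_filter, Finset.mem_range] at ha
    obtain ⟨b, rfl⟩ := ha.2
    show _ = Complex.exp (-(2 * Real.pi * Complex.I * ((d*b/d : ℕ):ℂ) * m / ((n/d : ℕ):ℂ)))
    rw [Nat.mul_div_cancel_left b hd0]
    congr 1
    rw [← hcast]
    push_cast
    field_simp

lemma master_sum (p q m : ℕ) (hp : p.Prime) (hq : q.Prime) (hpq : p ≠ q) :
    ∑ k ∈ Finset.Icc 1 (p*q), (Nat.gcd k (p*q) : ℂ) *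
        Complex.exp (-(2 * Real.pi * Complex.I * k * m / ((p*q : ℕ):ℂ))) =
      (if (p*q) ∣ m then ((p*q : ℕ):ℂ) else 0) + ((p:ℂ)-1) * (if q ∣ m then (q:ℂ) else 0)
      + ((q:ℂ)-1) * (if p ∣ m then (p:ℂ) else 0) + ((p:ℂ)-1)*((q:ℂ)-1) := by
  have hpq' : Nat.Coprime p q := (Nat.coprime_primes hp hq).mpr hpq
  have hn : 0 < p * q := Nat.mul_pos hp.pos hq.pos
  have hn0 : ((p*q : ℕ):ℂ) ≠ 0 := Nat.cast_ne_zero.mpr hn.ne'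
  set E : ℕ → ℂ := fun k => Complex.exp (-(2 * Real.pi * Complex.I * k * m / ((p*q : ℕ):ℂ))) with hE
  -- step 1 : Icc 1 n → range n
  have hEn : E (p*q) = 1 := by
    rw [hE]
    have : -(2 * (Real.pi:ℂ) * Complex.I * ((p*q : ℕ):ℂ) * m / ((p*q : ℕ):ℂ)) =
        ((-m : ℤ):ℂ) * (2 * Real.pi * Complex.I) := by
      have hp0 : (p:ℂ) ≠ 0 := Nat.cast_ne_zero.mpr hp.pos.ne'
      have hq0 : (q:ℂ) ≠ 0 := Nat.cast_ne_zero.mpr hq.pos.ne'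
      push_cast; field_simp
    simp only [this, Complex.exp_int_mul_two_pi_mul_I]
  have hE0 : E 0 = 1 := by simp [hE]
  have hIcc : ∑ k ∈ Finset.Icc 1 (p*q), (Nat.gcd k (p*q) : ℂ) * E k
      = ∑ k ∈ Finset.range (p*q), (Nat.gcd k (p*q) : ℂ) * E k := by
    have h1 : Finset.Icc 1 (p*q) = (Finset.range (p*q+1)).erase 0 := by
      ext x; simp [Nat.lt_succ_iff]; omega
    rw [h1, Finset.sum_erase_eq_sub (by simp [hn]), Finset.sum_range_succ]
    rw [Nat.gcd_self, Nat.gcd_zero_left, hEn, hE0]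
    ring
  rw [hIcc]
  -- step 2 : pointwise decomposition
  have hsplit : ∀ k, (Nat.gcd k (p*q) : ℂ) * E k
      = (if 1 ∣ k then E k else 0) + ((p:ℂ)-1) * (if p ∣ k then E k else 0)
        + ((q:ℂ)-1) * (if q ∣ k then E k else 0)
        + ((p:ℂ)-1)*((q:ℂ)-1) * (if p*q ∣ k then E k else 0) := by
    intro k
    by_cases hpk : p ∣ k <;> by_cases hqk : q ∣ k
    · have hnk : p*q ∣ k := Nat.Coprime.mul_dvd_of_dvd_of_dvd hpq' hpk hqk
      have hg : Nat.gcd k (p*q) = p*q := Nat.gcd_eq_right hnk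
      simp only [hg, if_pos hpk, if_pos hqk, if_pos hnk, if_pos (one_dvd k)]
      push_cast; ring
    · have hg : Nat.gcd k (p*q) = p := by
        have h1 : p ∣ Nat.gcd k (p*q) := Nat.dvd_gcd hpk ⟨q, rfl⟩
        have h4 : ¬ q ∣ Nat.gcd k (p*q) := fun hc => hqk (hc.trans (Nat.gcd_dvd_left _ _))
        have h2 : Nat.gcd k (p*q) ∣ p :=
          Nat.Coprime.dvd_of_dvd_mul_right (Nat.coprime_comm.mp ((hq.coprime_iff_not_dvd).mpr h4))
            (Nat.gcd_dvd_right _ _)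
        exact Nat.dvd_antisymm h2 h1
      have hnk : ¬ p*q ∣ k := fun hc => hqk ((dvd_mul_left q p).trans hc)
      simp only [hg, if_pos hpk, if_neg hqk, if_neg hnk, if_pos (one_dvd k)]
      push_cast; ring
    · have hg : Nat.gcd k (p*q) = q := by
        have h1 : q ∣ Nat.gcd k (p*q) := Nat.dvd_gcd hqk ⟨p, mul_comm p q⟩
        have h4 : ¬ p ∣ Nat.gcd k (p*q) := fun hc => hpk (hc.trans (Nat.gcd_dvd_left _ _))
        have h2 : Nat.gcd k (p*q) ∣ q := by
          refine Nat.Coprime.dvd_of_dvd_mul_left (Nat.coprime_comm.mp ((hp.coprime_iff_not_dvd).mpr h4)) ?_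
          exact Nat.gcd_dvd_right _ _
        exact Nat.dvd_antisymm h2 h1
      have hnk : ¬ p*q ∣ k := fun hc => hpk ((dvd_mul_right p q).trans hc)
      simp only [hg, if_neg hpk, if_pos hqk, if_neg hnk, if_pos (one_dvd k)]
      push_cast; ring
    · have hg : Nat.gcd k (p*q) = 1 :=
        Nat.Coprime.mul_right (Nat.coprime_comm.mp ((hp.coprime_iff_not_dvd).mpr hpk))
          (Nat.coprime_comm.mp ((hq.coprime_iff_not_dvd).mpr hqk))
      have hnk : ¬ p*q ∣ k := fun hc => hpk ((dvd_mul_right p q).trans hc)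
      simp only [hg, if_neg hpk, if_neg hqk, if_neg hnk, if_pos (one_dvd k)]
      push_cast; ring
  rw [Finset.sum_congr rfl fun k _ => hsplit k]
  simp only [Finset.sum_add_distrib, ← Finset.mul_sum]
  rw [show ∀ s : Finset ℕ, ∑ k ∈ s, (if 1 ∣ k then E k else 0) = ∑ k ∈ s, (if (1:ℕ) ∣ k then E k else 0) from fun s => rfl]
  rw [mult_sum (p*q) 1 m hn (one_dvd _) one_pos,
      mult_sum (p*q) p m hn (Dvd.intro q rfl) hp.pos,
      mult_sum (p*q) q m hn (dvd_mul_left q p) hq.pos,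
      mult_sum (p*q) (p*q) m hn dvd_rfl hn]
  rw [Nat.div_one, Nat.mul_div_cancel_left q hp.pos, (show p*q/q = p by rw [mul_comm]; exact Nat.mul_div_cancel_left p hq.pos), Nat.div_self hn]
  simp only [one_dvd, if_pos]
  ring


theorem dft_gcd_pq_values (p q m : ℕ) (hp : p.Prime) (hq : q.Prime)
    (hpq : p ≠ q) (hm1 : 1 ≤ m) (hmn : m ≤ p * q) :
    (Nat.gcd m (p * q) = 1 →
      ∑ k ∈ Finset.Icc 1 (p * q), (Nat.gcd k (p * q) : ℂ) *
          Complex.exp (-(2 * Real.pi * Complex.I * k * m / (p * q))) =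
        (Nat.totient (p * q) : ℂ)) ∧
    (Nat.gcd m (p * q) = p →
      ∑ k ∈ Finset.Icc 1 (p * q), (Nat.gcd k (p * q) : ℂ) *
          Complex.exp (-(2 * Real.pi * Complex.I * k * m / (p * q))) =
        (2 * (p : ℂ) - 1) * ((q : ℂ) - 1)) ∧
    (Nat.gcd m (p * q) = q →
      ∑ k ∈ Finset.Icc 1 (p * q), (Nat.gcd k (p * q) : ℂ) *
          Complex.exp (-(2 * Real.pi * Complex.I * k * m / (p * q))) =
        ((p : ℂ) - 1) * (2 * (q : ℂ) - 1)) ∧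
    (Nat.gcd m (p * q) = p * q →
      ∑ k ∈ Finset.Icc 1 (p * q), (Nat.gcd k (p * q) : ℂ) *
          Complex.exp (-(2 * Real.pi * Complex.I * k * m / (p * q))) =
        (2 * (p : ℂ) - 1) * (2 * (q : ℂ) - 1)) := by
  have hpq' : Nat.Coprime p q := (Nat.coprime_primes hp hq).mpr hpq
  have hM := master_sum p q m hp hq hpq
  have hcastpq : ((p*q : ℕ):ℂ) = (p:ℂ)*(q:ℂ) := by push_cast; ring
  rw [hcastpq] at hM
  refine ⟨?_, ?_, ?_, ?_⟩ <;> intro hg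
  · have hpm : ¬ p ∣ m := by
      intro h
      have h2 : p ∣ Nat.gcd m (p*q) := Nat.dvd_gcd h (dvd_mul_right p q)
      rw [hg] at h2
      have := Nat.le_of_dvd one_pos h2
      have := hp.two_le
      omega
    have hqm : ¬ q ∣ m := by
      intro h
      have h2 : q ∣ Nat.gcd m (p*q) := Nat.dvd_gcd h (dvd_mul_left q p)
      rw [hg] at h2
      have := Nat.le_of_dvd one_pos h2
      have := hq.two_le
      omega
    have hnm : ¬ p*q ∣ m := fun h => hpm ((dvd_mul_right p q).trans h)
    rw [hM, if_neg hnm, if_neg hqm, if_neg hpm]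
    rw [Nat.totient_mul hpq', Nat.totient_prime hp, Nat.totient_prime hq]
    push_cast [Nat.cast_sub hp.one_lt.le, Nat.cast_sub hq.one_lt.le]
    ring
  · have hpm : p ∣ m := hg ▸ Nat.gcd_dvd_left m (p*q)
    have hqm : ¬ q ∣ m := by
      intro h
      have h2 : q ∣ Nat.gcd m (p*q) := Nat.dvd_gcd h (dvd_mul_left q p)
      rw [hg] at h2
      exact hpq ((Nat.prime_dvd_prime_iff_eq hq hp).mp h2).symm
    have hnm : ¬ p*q ∣ m := fun h => hqm ((dvd_mul_left q p).trans h)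
    rw [hM, if_neg hnm, if_neg hqm, if_pos hpm]
    ring
  · have hqm : q ∣ m := hg ▸ Nat.gcd_dvd_left m (p*q)
    have hpm : ¬ p ∣ m := by
      intro h
      have h2 : p ∣ Nat.gcd m (p*q) := Nat.dvd_gcd h (dvd_mul_right p q)
      rw [hg] at h2
      exact hpq ((Nat.prime_dvd_prime_iff_eq hp hq).mp h2)
    have hnm : ¬ p*q ∣ m := fun h => hpm ((dvd_mul_right p q).trans h)
    rw [hM, if_neg hnm, if_pos hqm, if_neg hpm]
    ring
  · have hnm : p*q ∣ m := hg ▸ Nat.gcd_dvd_left m (p*q)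
    have hpm : p ∣ m := (dvd_mul_right p q).trans hnm
    have hqm : q ∣ m := (dvd_mul_left q p).trans hnm
    rw [hM, if_pos hnm, if_pos hqm, if_pos hpm]
    ring
end
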